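/- arXiv:1707.08820 — 6 statements merged into one kernel-verified Lean document; each statement's English description precedes it below -/
import Mathlib

section
/- Let α > 1 and β, C, C' > 0, let X_1, …, X_T be i.i.d. (α, β, C, C')-second order Pareto random variables, set B = (2C'T)^(1/((1+β)α)), Q1 = (1/(2C')) · max{(2C'/C)^((1+β)/β), (8C)^(1+β)}, and D_p = Γ(p − 1/α)/α for p ∈ {2, β+1}. Then for T ≥ Q1, | ∫_B^∞ ( P(max_{1≤i≤T} X_i ≤ x) − exp(−T C x^(−α)) ) dx | ≤ 4 D_2 C^(1/α) / T^(1 − 1/α) + 2 C' D_{β+1} / (C^(β+1−1/α) T^(β − 1/α)). -/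
open MeasureTheory ProbabilityTheory Real

/-- A probability distribution `μ` on `ℝ` is `(α, β, C, C')`-second order Pareto if its
cumulative distribution function `F(x) = μ (Iic x)` satisfies
`|1 - C x^(-α) - F(x)| ≤ C' x^(-α(1+β))` for every `x > 0`. -/
def IsSecondOrderPareto (μ : Measure ℝ) (α β C C' : ℝ) : Prop :=
  ∀ x : ℝ, 0 < x → |1 - C * x ^ (-α) - (μ (Set.Iic x)).toReal| ≤ C' * x ^ (-(α * (1 + β)))

lemma abs_pow_sub_pow_le' {a b m : ℝ} (ha : 0 ≤ a) (hb : 0 ≤ b)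
    (ham : a ≤ m) (hbm : b ≤ m) :
    ∀ n : ℕ, |a ^ (n+1) - b ^ (n+1)| ≤ (n+1) * m ^ n * |a - b| := by
  intro n
  induction n with
  | zero => simp
  | succ n ih =>
    have hm : 0 ≤ m := le_trans ha ham
    have key : a ^ (n+2) - b ^ (n+2) = a * (a ^ (n+1) - b ^ (n+1)) + (a - b) * b ^ (n+1) := by
      ring
    push_cast
    calc |a ^ (n+1+1) - b ^ (n+1+1)| ≤ |a * (a ^ (n+1) - b ^ (n+1))| + |(a - b) * b ^ (n+1)| := by
          rw [show n+1+1 = n+2 from rfl, key]; exact abs_add_le _ _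
      _ = a * |a ^ (n+1) - b ^ (n+1)| + |a - b| * b ^ (n+1) := by
          rw [abs_mul, abs_mul, abs_of_nonneg ha, abs_of_nonneg (pow_nonneg hb _)]
      _ ≤ m * ((n+1) * m ^ n * |a - b|) + |a - b| * m ^ (n+1) := by
          gcongr
      _ = ((n:ℝ)+1+1) * m ^ (n+1) * |a - b| := by ring

lemma pareto_gamma_integral {α s p : ℝ} (hα : 0 < α) (hs : 0 < s) (hp : 1/α < p) :
    IntegrableOn (fun x => Real.exp (-(s * x ^ (-α))) * x ^ (-(p*α))) (Set.Ioi (0:ℝ)) ∧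
    ∫ x in Set.Ioi (0:ℝ), Real.exp (-(s * x ^ (-α))) * x ^ (-(p*α))
      = Real.Gamma (p - 1/α) / α * s ^ (-(p - 1/α)) := by
  have hαne : α ≠ 0 := ne_of_gt hα
  set a := p - 1/α with ha_def
  have ha : 0 < a := sub_pos.mpr hp
  set f : ℝ → ℝ := fun y => Real.exp (-(s * y)) * y ^ (a - 1) with hf_def
  have hf_int : IntegrableOn f (Set.Ioi (0:ℝ)) := by
    have h0 : IntegrableOn (fun x : ℝ => Real.exp (-x) * x ^ (a - 1)) (Set.Ioi (0:ℝ)) :=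
      Real.GammaIntegral_convergent ha
    have h1 : IntegrableOn (fun x : ℝ => Real.exp (-(s*x)) * (s*x) ^ (a - 1)) (Set.Ioi (0:ℝ)) := by
      have := (integrableOn_Ioi_comp_mul_left_iff
        (fun x : ℝ => Real.exp (-x) * x ^ (a - 1)) 0 hs).mpr (by simpa using h0)
      simpa using this
    have h2 : IntegrableOn (fun x : ℝ => s ^ (a-1) * (Real.exp (-(s*x)) * x ^ (a - 1)))
        (Set.Ioi (0:ℝ)) := by
      apply h1.congr_fun _ measurableSet_Ioi
      intro x hx
      dsimp only
      rw [Real.mul_rpow hs.le (le_of_lt hx)]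
      ring
    have h3 : IntegrableOn
        (fun x : ℝ => (s ^ (a-1))⁻¹ * (s ^ (a-1) * (Real.exp (-(s*x)) * x ^ (a - 1))))
        (Set.Ioi (0:ℝ)) := h2.const_mul (s ^ (a-1))⁻¹
    apply h3.congr_fun _ measurableSet_Ioi
    intro x hx
    simp only [hf_def]
    rw [← mul_assoc, inv_mul_cancel₀ (ne_of_gt (rpow_pos_of_pos hs _)), one_mul]
  have hq : (-α) ≠ 0 := neg_ne_zero.mpr hαne
  have hcongr : ∀ x ∈ Set.Ioi (0:ℝ), (|(-α)| * x ^ ((-α) - 1)) • f (x ^ (-α))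
      = α * (Real.exp (-(s * x ^ (-α))) * x ^ (-(p*α))) := by
    intro x hx
    have hx0 : (0:ℝ) < x := hx
    have h1 : (x ^ (-α)) ^ (a - 1) = x ^ ((-α) * (a-1)) := by
      rw [← Real.rpow_mul hx0.le]
    rw [smul_eq_mul, hf_def]
    simp only []
    rw [h1, abs_of_nonpos (by linarith : (-α) ≤ 0), neg_neg]
    rw [show α * x ^ ((-α)-1) * (Real.exp (-(s * x ^ (-α))) * x ^ ((-α)*(a-1)))
      = α * (Real.exp (-(s * x ^ (-α))) * (x ^ ((-α)-1) * x ^ ((-α)*(a-1)))) by ring]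
    rw [← Real.rpow_add hx0]
    rw [show (-α)-1 + (-α)*(a-1) = -(p*α) by rw [ha_def]; field_simp; ring]
  constructor
  · have h4 : IntegrableOn (fun x : ℝ => (|(-α)| * x ^ ((-α) - 1)) • f (x ^ (-α)))
        (Set.Ioi (0:ℝ)) := (integrableOn_Ioi_comp_rpow_iff f hq).mpr hf_int
    have h5 : IntegrableOn (fun x : ℝ => α * (Real.exp (-(s * x ^ (-α))) * x ^ (-(p*α))))
        (Set.Ioi (0:ℝ)) := h4.congr_fun hcongr measurableSet_Ioi
    have h6 : IntegrableOn
        (fun x : ℝ => α⁻¹ * (α * (Real.exp (-(s * x ^ (-α))) * x ^ (-(p*α)))))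
        (Set.Ioi (0:ℝ)) := h5.const_mul α⁻¹
    apply h6.congr_fun _ measurableSet_Ioi
    intro x hx
    dsimp only
    rw [← mul_assoc, inv_mul_cancel₀ hαne, one_mul]
  · have hsub := integral_comp_rpow_Ioi f hq
    rw [setIntegral_congr_fun measurableSet_Ioi hcongr] at hsub
    rw [integral_const_mul] at hsub
    have hgamma : ∫ y in Set.Ioi (0:ℝ), f y = (1/s) ^ a * Real.Gamma a := by
      rw [← Real.integral_rpow_mul_exp_neg_mul_Ioi ha hs]
      apply setIntegral_congr_fun measurableSet_Ioi
      intro y _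
      simp only [hf_def]
      ring
    rw [hgamma] at hsub
    have heq : ∫ x in Set.Ioi (0:ℝ), Real.exp (-(s * x ^ (-α))) * x ^ (-(p*α))
        = α⁻¹ * ((1/s) ^ a * Real.Gamma a) := by
      rw [← hsub, ← mul_assoc, inv_mul_cancel₀ hαne, one_mul]
    rw [heq, one_div, Real.inv_rpow hs.le, ← Real.rpow_neg hs.le]
    ring

theorem tail_term_bound
    {Ω : Type*} [MeasurableSpace Ω] (P : Measure Ω) [IsProbabilityMeasure P]
    (α β C C' : ℝ) (hα : 1 < α) (hβ : 0 < β) (hC : 0 < C) (hC' : 0 < C')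
    (T : ℕ) (X : Fin T → Ω → ℝ)
    (hmeas : ∀ i, Measurable (X i))
    (hindep : iIndepFun X P)
    (μ : Measure ℝ) (hmap : ∀ i, P.map (X i) = μ)
    (hpareto : IsSecondOrderPareto μ α β C C')
    (hT : (1 / (2 * C')) * max ((2 * C' / C) ^ ((1 + β) / β)) ((8 * C) ^ (1 + β)) ≤ (T : ℝ)) :
    |∫ x in Set.Ioi ((2 * C' * (T : ℝ)) ^ (1 / ((1 + β) * α))),
        ((P {ω | (⨆ i, X i ω) ≤ x}).toReal - Real.exp (-((T : ℝ) * C * x ^ (-α))))| ≤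
      4 * (Gamma (2 - 1 / α) / α) * C ^ (1 / α) / (T : ℝ) ^ (1 - 1 / α)
      + 2 * C' * (Gamma (β + 1 - 1 / α) / α) /
          (C ^ (β + 1 - 1 / α) * (T : ℝ) ^ (β - 1 / α)) := by
  have hα0 : (0:ℝ) < α := by linarith
  have hαne : α ≠ 0 := ne_of_gt hα0
  have hβ1 : (0:ℝ) < 1 + β := by linarith
  have hβ1ne : (1:ℝ) + β ≠ 0 := ne_of_gt hβ1
  have hβne : β ≠ 0 := ne_of_gt hβ
  -- T is positive
  have hTpos : (0:ℝ) < (T:ℝ) := by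
    refine lt_of_lt_of_le ?_ hT
    have : (0:ℝ) < (8*C) ^ (1+β) := rpow_pos_of_pos (by linarith) _
    have h2 : (0:ℝ) < max ((2 * C' / C) ^ ((1 + β) / β)) ((8 * C) ^ (1 + β)) :=
      lt_max_of_lt_right this
    positivity
  have hTnat : 1 ≤ T := by
    by_contra h
    push_neg at h
    interval_cases T
    simp at hTpos
  obtain ⟨n, hn⟩ : ∃ n, T = n + 1 := ⟨T - 1, by omega⟩
  have hcastT : ((n:ℝ)+1) = (T:ℝ) := by rw [hn]; push_cast; ring
  set B := (2 * C' * (T : ℝ)) ^ (1 / ((1 + β) * α)) with hBdef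
  have h2CT : (0:ℝ) < 2 * C' * T := by positivity
  have hBpos : 0 < B := rpow_pos_of_pos h2CT _
  have hmax : max ((2 * C' / C) ^ ((1 + β) / β)) ((8 * C) ^ (1 + β)) ≤ 2 * C' * T := by
    have h := mul_le_mul_of_nonneg_left hT (by positivity : (0:ℝ) ≤ 2 * C')
    calc max ((2 * C' / C) ^ ((1 + β) / β)) ((8 * C) ^ (1 + β))
        = 2 * C' * (1 / (2 * C') * max ((2 * C' / C) ^ ((1 + β) / β)) ((8 * C) ^ (1 + β))) := by
          field_simp
      _ ≤ 2 * C' * T := h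
  have hBr : ∀ r : ℝ, B ^ r = (2 * C' * (T:ℝ)) ^ (1 / ((1 + β) * α) * r) := by
    intro r
    rw [hBdef, ← Real.rpow_mul h2CT.le]
  have hBab : B ^ (α * (1+β)) = 2 * C' * T := by
    rw [hBr, show 1 / ((1 + β) * α) * (α * (1+β)) = 1 by field_simp <;> ring, Real.rpow_one]
  have hB8C : 8 * C ≤ B ^ α := by
    have h1 : (8*C) ^ (1+β) ≤ 2*C'*T := le_trans (le_max_right _ _) hmax
    calc 8*C = ((8*C) ^ (1+β)) ^ (1/(1+β)) := by
          rw [← Real.rpow_mul (by positivity : (0:ℝ) ≤ 8*C), mul_one_div,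
            div_self hβ1ne, Real.rpow_one]
      _ ≤ (2*C'*T) ^ (1/(1+β)) := Real.rpow_le_rpow (by positivity) h1 (by positivity)
      _ = B ^ α := by rw [hBr]; congr 1; field_simp
  have hB2C : 2*C'/C ≤ B ^ (α*β) := by
    have h1 : (2*C'/C) ^ ((1+β)/β) ≤ 2*C'*T := le_trans (le_max_left _ _) hmax
    calc 2*C'/C = ((2*C'/C) ^ ((1+β)/β)) ^ (β/(1+β)) := by
          rw [← Real.rpow_mul (by positivity : (0:ℝ) ≤ 2*C'/C),
            show (1+β)/β * (β/(1+β)) = 1 by field_simp <;> ring, Real.rpow_one]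
      _ ≤ (2*C'*T) ^ (β/(1+β)) := Real.rpow_le_rpow (by positivity) h1 (by positivity)
      _ = B ^ (α*β) := by rw [hBr]; congr 1; field_simp <;> ring
  -- μ is a probability measure
  haveI hμprob : IsProbabilityMeasure μ := by
    rw [← hmap ⟨0, by omega⟩]
    exact Measure.isProbabilityMeasure_map (hmeas _).aemeasurable
  set F : ℝ → ℝ := fun x => (μ (Set.Iic x)).toReal with hFdef
  have hF0 : ∀ x, 0 ≤ F x := fun x => ENNReal.toReal_nonneg
  have hF1 : ∀ x, F x ≤ 1 := by
    intro x
    have h : μ (Set.Iic x) ≤ 1 := prob_le_one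
    calc F x ≤ ENNReal.toReal 1 := ENNReal.toReal_mono ENNReal.one_ne_top h
      _ = 1 := ENNReal.toReal_one
  -- the product formula
  have hprod : ∀ x : ℝ, (P {ω | (⨆ i, X i ω) ≤ x}).toReal = F x ^ T := by
    intro x
    haveI : Nonempty (Fin T) := ⟨⟨0, by omega⟩⟩
    have hset : {ω | (⨆ i, X i ω) ≤ x} = ⋂ i, X i ⁻¹' (Set.Iic x) := by
      ext ω
      simp only [Set.mem_setOf_eq, Set.mem_iInter, Set.mem_preimage, Set.mem_Iic]
      exact ciSup_le_iff (Set.finite_range _).bddAbove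
    have hind := hindep.measure_inter_preimage_eq_mul Finset.univ
      (sets := fun _ => Set.Iic x) (fun i _ => measurableSet_Iic)
    have hPi : ∀ i, P (X i ⁻¹' Set.Iic x) = μ (Set.Iic x) := by
      intro i
      rw [← hmap i, Measure.map_apply (hmeas i) measurableSet_Iic]
    have huniv : (⋂ i ∈ Finset.univ, X i ⁻¹' (Set.Iic x)) = ⋂ i, X i ⁻¹' (Set.Iic x) := by
      ext ω; simp
    rw [hset, ← huniv, hind]
    simp only [hPi, Finset.prod_const, Finset.card_univ, Fintype.card_fin]
    rw [ENNReal.toReal_pow]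
  clear_value F
  simp_rw [hprod]
  -- the dominating function
  have hTC : (0:ℝ) < (T:ℝ) * C := by positivity
  have hp1 : 1/α < 1 + β := by
    have := inv_lt_one_of_one_lt₀ hα
    rw [one_div]; linarith
  have hp2 : 1/α < 2 := by
    have := inv_lt_one_of_one_lt₀ hα
    rw [one_div]; linarith
  obtain ⟨hI1int, hI1val⟩ := pareto_gamma_integral hα0 hTC hp1
  obtain ⟨hI2int, hI2val⟩ := pareto_gamma_integral hα0 hTC hp2
  set g : ℝ → ℝ := fun x => 2*(T:ℝ)*C' * (Real.exp (-((T:ℝ)*C * x ^ (-α))) * x ^ (-((1+β)*α)))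
      + 2*(T:ℝ)*C^2 * (Real.exp (-((T:ℝ)*C * x ^ (-α))) * x ^ (-(2*α))) with hgdef
  have hgint : IntegrableOn g (Set.Ioi (0:ℝ)) :=
    (hI1int.const_mul _).add (hI2int.const_mul _)
  have hgnn : ∀ x ∈ Set.Ioi (0:ℝ), 0 ≤ g x := by
    intro x hx
    have hx0 : (0:ℝ) < x := hx
    rw [hgdef]
    positivity
  clear_value g
  -- pointwise bound
  have hpoint : ∀ x ∈ Set.Ioi B, |F x ^ T - Real.exp (-((T:ℝ) * C * x ^ (-α)))| ≤ g x := by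
    intro x hx
    have hxB : B < x := hx
    have hx0 : (0:ℝ) < x := lt_trans hBpos hxB
    set u := C * x ^ (-α) with hudef
    set v := C' * x ^ (-(α*(1+β))) with hvdef
    have hu0 : 0 < u := by positivity
    have hv0 : 0 < v := by positivity
    clear_value u v
    have hxge : ∀ r : ℝ, 0 ≤ r → B ^ r ≤ x ^ r :=
      fun r hr => Real.rpow_le_rpow hBpos.le hxB.le hr
    -- u ≤ 1/8
    have hu8 : u ≤ 1/8 := by
      have h1 : 8*C ≤ x ^ α := le_trans hB8C (hxge α hα0.le)
      have h2 : x ^ (-α) ≤ (8*C)⁻¹ := by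
        rw [Real.rpow_neg hx0.le]
        exact inv_anti₀ (by positivity) h1
      calc u ≤ C * (8*C)⁻¹ := by rw [hudef]; gcongr
        _ = 1/8 := by field_simp <;> ring
    -- T * v ≤ 1/2
    have hTv : (T:ℝ) * v ≤ 1/2 := by
      have h1 : x ^ (-(α*(1+β))) ≤ (2*C'*(T:ℝ))⁻¹ := by
        rw [Real.rpow_neg hx0.le, ← hBab]
        exact inv_anti₀ (by rw [hBab]; positivity) (hxge _ (by positivity))
      have h2 : v ≤ C' * (2*C'*(T:ℝ))⁻¹ := by rw [hvdef]; gcongr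
      calc (T:ℝ) * v ≤ (T:ℝ) * (C' * (2*C'*(T:ℝ))⁻¹) := by gcongr
        _ = 1/2 := by field_simp
    -- 2v ≤ u
    have hvu : 2*v ≤ u := by
      have h1 : x ^ (-(α*β)) ≤ C/(2*C') := by
        rw [Real.rpow_neg hx0.le, show C/(2*C') = (2*C'/C)⁻¹ by rw [inv_div]]
        exact inv_anti₀ (by positivity) (le_trans hB2C (hxge _ (by positivity)))
      have h2 : v = C' * x ^ (-α) * x ^ (-(α*β)) := by
        rw [hvdef, mul_assoc, ← Real.rpow_add hx0]
        congr 2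
        ring
      have h3 : v ≤ C' * x ^ (-α) * (C/(2*C')) := by
        rw [h2]; gcongr
      calc 2*v ≤ 2*(C' * x ^ (-α) * (C/(2*C'))) := by linarith
        _ = u := by rw [hudef]; field_simp
    -- Pareto bound
    have hpar : |1 - u - F x| ≤ v := by
      rw [hudef, hvdef, hFdef]; exact hpareto x hx0
    have hFle : F x ≤ 1 - u + v := by
      have := abs_le.mp hpar
      linarith [this.1, this.2]
    have hFexp : F x ≤ Real.exp (v - u) := by
      have := Real.add_one_le_exp (v - u)
      linarith
    have hbexp : Real.exp (-u) ≤ Real.exp (v - u) :=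
      Real.exp_le_exp.mpr (by linarith)
    have hmaxle : max (F x) (Real.exp (-u)) ≤ Real.exp (v - u) := max_le hFexp hbexp
    -- |F - exp(-u)| ≤ v + u^2
    have habs : |F x - Real.exp (-u)| ≤ v + u^2 := by
      have h1 : |F x - (1 - u)| ≤ v := by
        rw [abs_sub_comm]
        calc |(1 - u) - F x| = |1 - u - F x| := by ring_nf
          _ ≤ v := hpar
      have h2 : |(1 - u) - Real.exp (-u)| ≤ u^2 := by
        rw [show (1 - u) - Real.exp (-u) = -(Real.exp (-u) - 1 - (-u)) by ring, abs_neg]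
        have := Real.abs_exp_sub_one_sub_id_le
          (x := -u) (by rw [abs_neg, abs_of_nonneg hu0.le]; linarith)
        calc |Real.exp (-u) - 1 - (-u)| ≤ (-u)^2 := this
          _ = u^2 := by ring
      calc |F x - Real.exp (-u)| ≤ |F x - (1 - u)| + |(1 - u) - Real.exp (-u)| :=
            abs_sub_le _ _ _
        _ ≤ v + u^2 := by linarith
    -- exponential factor
    have hfactor : Real.exp (v - u) ^ n ≤ 2 * Real.exp (-((T:ℝ)*u)) := by
      rw [← Real.exp_nat_mul]
      have hncast : (n:ℝ) = (T:ℝ) - 1 := by linarith [hcastT]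
      have hexple : (n:ℝ) * (v - u) ≤ 5/8 + -((T:ℝ)*u) := by
        rw [hncast]
        have hexpand : ((T:ℝ)-1) * (v - u) = (T:ℝ)*v - (T:ℝ)*u - v + u := by ring
        rw [hexpand]
        linarith [hTv, hv0.le, hu8]
      have h2exp : Real.exp (5/8 : ℝ) ≤ 2 := by
        rw [show (2:ℝ) = Real.exp (Real.log 2) from (Real.exp_log two_pos).symm]
        apply Real.exp_le_exp.mpr
        have := Real.log_two_gt_d9
        norm_num
        linarith
      calc Real.exp ((n:ℝ) * (v - u)) ≤ Real.exp (5/8 + -((T:ℝ)*u)) :=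
            Real.exp_le_exp.mpr hexple
        _ = Real.exp (5/8 : ℝ) * Real.exp (-((T:ℝ)*u)) := Real.exp_add _ _
        _ ≤ 2 * Real.exp (-((T:ℝ)*u)) := by gcongr
    -- assemble
    have hexpT : Real.exp (-((T:ℝ) * C * x ^ (-α))) = Real.exp (-u) ^ T := by
      rw [← Real.exp_nat_mul]
      congr 1
      rw [hudef]; push_cast; ring
    have hTu : Real.exp (-((T:ℝ)*u)) = Real.exp (-((T:ℝ) * C * x ^ (-α))) := by
      congr 1; rw [hudef]; ring
    rw [hexpT, hn]
    calc |F x ^ (n+1) - Real.exp (-u) ^ (n+1)|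
        ≤ ((n:ℝ)+1) * (max (F x) (Real.exp (-u))) ^ n * |F x - Real.exp (-u)| :=
          abs_pow_sub_pow_le' (hF0 x) (Real.exp_nonneg _)
            (le_max_left _ _) (le_max_right _ _) n
      _ ≤ ((n:ℝ)+1) * (Real.exp (v - u)) ^ n * (v + u^2) := by
          have h0 : (0:ℝ) ≤ max (F x) (Real.exp (-u)) := le_trans (hF0 x) (le_max_left _ _)
          have hnn1 : (0:ℝ) ≤ (n:ℝ)+1 := by positivity
          have h1 : (max (F x) (Real.exp (-u))) ^ n ≤ (Real.exp (v - u)) ^ n :=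
            pow_le_pow_left₀ h0 hmaxle n
          apply mul_le_mul _ habs (abs_nonneg _) (by positivity)
          exact mul_le_mul le_rfl h1 (pow_nonneg h0 n) hnn1
      _ ≤ ((n:ℝ)+1) * (2 * Real.exp (-((T:ℝ)*u))) * (v + u^2) := by
          have hnn1 : (0:ℝ) ≤ (n:ℝ)+1 := by positivity
          have hvu2 : (0:ℝ) ≤ v + u^2 := add_nonneg hv0.le (sq_nonneg u)
          apply mul_le_mul _ le_rfl hvu2 (by positivity)
          exact mul_le_mul le_rfl hfactor (pow_nonneg (Real.exp_nonneg _) n) hnn1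
      _ = g x := by
          rw [hcastT, hTu, hgdef, hvdef, hudef]
          have h1 : x ^ (-(α*(1+β))) = x ^ (-((1+β)*α)) := by ring_nf
          have h2 : (C * x ^ (-α))^2 = C^2 * x ^ (-(2*α)) := by
            rw [mul_pow, sq (x ^ (-α)), ← Real.rpow_add hx0]
            congr 2
            ring
          rw [h1, h2]
          ring
  -- integral computation
  have hval : ∫ x in Set.Ioi (0:ℝ), g x
      = 2*(T:ℝ)*C' * (Real.Gamma (1 + β - 1/α) / α * ((T:ℝ)*C) ^ (-(1 + β - 1/α)))
      + 2*(T:ℝ)*C^2 * (Real.Gamma (2 - 1/α) / α * ((T:ℝ)*C) ^ (-(2 - 1/α))) := by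
    rw [hgdef]
    rw [integral_add (hI1int.const_mul _) (hI2int.const_mul _),
      integral_const_mul, integral_const_mul, hI1val, hI2val]
  -- rpow algebra
  have hsplit : ∀ e : ℝ, ((T:ℝ)*C) ^ (-e) = ((T:ℝ) ^ e)⁻¹ * (C ^ e)⁻¹ := by
    intro e
    rw [Real.rpow_neg hTC.le, Real.mul_rpow hTpos.le hC.le, mul_inv]
  have hC2cast : C^2 = C ^ (2:ℝ) := by
    rw [show (2:ℝ) = ((2:ℕ):ℝ) by norm_num, Real.rpow_natCast]
  have hTne : ((T:ℝ)) ≠ 0 := ne_of_gt hTpos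
  have hterm1 : 2*(T:ℝ)*C' * (Real.Gamma (1 + β - 1/α) / α * ((T:ℝ)*C) ^ (-(1 + β - 1/α)))
      = 2 * C' * (Gamma (β + 1 - 1 / α) / α) /
          (C ^ (β + 1 - 1 / α) * (T : ℝ) ^ (β - 1 / α)) := by
    rw [hsplit]
    rw [show (β:ℝ) + 1 - 1/α = 1 + β - 1/α by ring]
    have hTsplit : (T:ℝ) ^ ((1:ℝ)+β-1/α) = (T:ℝ) * (T:ℝ)^(β-1/α) := by
      rw [show (1:ℝ)+β-1/α = 1+(β-1/α) by ring, Real.rpow_add hTpos, Real.rpow_one]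
    rw [hTsplit]
    have h2 : (T:ℝ)^(β-1/α) ≠ 0 := ne_of_gt (rpow_pos_of_pos hTpos _)
    have h3 : C^((1:ℝ)+β-1/α) ≠ 0 := ne_of_gt (rpow_pos_of_pos hC _)
    field_simp
  have hterm2 : 2*(T:ℝ)*C^2 * (Real.Gamma (2 - 1/α) / α * ((T:ℝ)*C) ^ (-(2 - 1/α)))
      ≤ 4 * (Gamma (2 - 1 / α) / α) * C ^ (1 / α) / (T : ℝ) ^ (1 - 1 / α) := by
    have hGnn : 0 ≤ Real.Gamma (2 - 1/α) := by
      apply Real.Gamma_nonneg_of_nonneg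
      linarith [hp2]
    have hTsplit2 : (T:ℝ) ^ ((2:ℝ)-1/α) = (T:ℝ) * (T:ℝ)^((1:ℝ)-1/α) := by
      rw [show (2:ℝ)-1/α = 1+(1-1/α) by ring, Real.rpow_add hTpos, Real.rpow_one]
    have hCsplit : (C:ℝ)^2 = C ^ ((2:ℝ)-1/α) * C ^ ((1:ℝ)/α) := by
      rw [hC2cast, ← Real.rpow_add hC]
      congr 1
      ring
    have heq : 2*(T:ℝ)*C^2 * (Real.Gamma (2 - 1/α) / α * ((T:ℝ)*C) ^ (-(2 - 1/α)))
        = 2 * (Real.Gamma (2 - 1/α) / α) * C ^ (1/α) * (((T:ℝ) ^ ((1:ℝ) - 1/α))⁻¹) := by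
      rw [hsplit, hTsplit2, hCsplit]
      have h2 : (T:ℝ)^((1:ℝ)-1/α) ≠ 0 := ne_of_gt (rpow_pos_of_pos hTpos _)
      have h3 : C^((2:ℝ)-1/α) ≠ 0 := ne_of_gt (rpow_pos_of_pos hC _)
      field_simp
    rw [heq, div_eq_mul_inv]
    have hpos : 0 ≤ (Real.Gamma (2 - 1/α) / α) * C ^ (1/α) * (((T:ℝ) ^ ((1:ℝ) - 1/α))⁻¹) := by
      positivity
    calc 2 * (Real.Gamma (2 - 1/α) / α) * C ^ (1/α) * (((T:ℝ) ^ ((1:ℝ) - 1/α))⁻¹)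
        = 2 * ((Real.Gamma (2 - 1/α) / α) * C ^ (1/α) * (((T:ℝ) ^ ((1:ℝ) - 1/α))⁻¹)) := by ring
      _ ≤ 4 * ((Real.Gamma (2 - 1/α) / α) * C ^ (1/α) * (((T:ℝ) ^ ((1:ℝ) - 1/α))⁻¹)) := by
          linarith
      _ = 4 * (Real.Gamma (2 - 1/α) / α) * C ^ (1/α) * (((T:ℝ) ^ ((1:ℝ) - 1/α))⁻¹) := by ring
  -- assemble the integral chain
  have hsub : Set.Ioi B ⊆ Set.Ioi (0:ℝ) := Set.Ioi_subset_Ioi hBpos.le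
  calc |∫ x in Set.Ioi B, (F x ^ T - Real.exp (-((T:ℝ) * C * x ^ (-α))))|
      ≤ ∫ x in Set.Ioi B, |F x ^ T - Real.exp (-((T:ℝ) * C * x ^ (-α)))| := by
        simpa [Real.norm_eq_abs] using
          norm_integral_le_integral_norm (μ := volume.restrict (Set.Ioi B))
            (fun x => F x ^ T - Real.exp (-((T:ℝ) * C * x ^ (-α))))
    _ ≤ ∫ x in Set.Ioi B, g x := by
        apply integral_mono_of_nonneg (ae_of_all _ (fun x => abs_nonneg _))
          (hgint.mono_set hsub)
        exact (ae_restrict_iff' measurableSet_Ioi).2 (ae_of_all _ hpoint)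
    _ ≤ ∫ x in Set.Ioi (0:ℝ), g x := by
        apply setIntegral_mono_set hgint
        · exact (ae_restrict_iff' measurableSet_Ioi).2 (ae_of_all _ hgnn)
        · exact HasSubset.Subset.eventuallyLE hsub
    _ ≤ 4 * (Gamma (2 - 1 / α) / α) * C ^ (1 / α) / (T : ℝ) ^ (1 - 1 / α)
      + 2 * C' * (Gamma (β + 1 - 1 / α) / α) /
          (C ^ (β + 1 - 1 / α) * (T : ℝ) ^ (β - 1 / α)) := by
        rw [hval]
        linarith [hterm1, hterm2]
end

section
/- Let α, β, C, C' > 0, let X_1, …, X_T be i.i.d. (α, β, C, C')-second order Pareto random variables, set B = (2C'T)^(1/((1+β)α)) and Q1 = (1/(2C')) · max{(2C'/C)^((1+β)/β), (8C)^(1+β)}. Then for T ≥ Q1 one has P(max_{1≤i≤T} X_i ≤ B) ≤ exp(−(T C / 2) B^(−α)) = exp(−(C/2)(2C')^(−1/(1+β)) T^(β/(β+1))), and consequently | ∫_0^B ( P(max_{1≤i≤T} X_i ≤ x) − exp(−T C x^(−α)) ) dx | ≤ 2 B · exp(−(T C / 2) B^(−α)). -/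
open MeasureTheory ProbabilityTheory Real

theorem bulk_term_bound
    {Ω : Type*} [MeasurableSpace Ω] (P : Measure Ω) [IsProbabilityMeasure P]
    (α β C C' : ℝ) (hα : 0 < α) (hβ : 0 < β) (hC : 0 < C) (hC' : 0 < C')
    (T : ℕ) (X : Fin T → Ω → ℝ)
    (hmeas : ∀ i, Measurable (X i))
    (hindep : iIndepFun X P)
    (μ : Measure ℝ) (hmap : ∀ i, P.map (X i) = μ)
    (hpareto : IsSecondOrderPareto μ α β C C')
    (B : ℝ) (hB : B = (2 * C' * (T : ℝ)) ^ (1 / ((1 + β) * α)))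
    (hT : (1 / (2 * C')) * max ((2 * C' / C) ^ ((1 + β) / β)) ((8 * C) ^ (1 + β)) ≤ (T : ℝ)) :
    ((P {ω | (⨆ i, X i ω) ≤ B}).toReal ≤ Real.exp (-((T : ℝ) * C / 2) * B ^ (-α))
      ∧ Real.exp (-((T : ℝ) * C / 2) * B ^ (-α))
          = Real.exp (-(C / 2 * (2 * C') ^ (-(1 / (1 + β)))) * (T : ℝ) ^ (β / (β + 1))))
      ∧ |∫ x in Set.Ioc (0 : ℝ) B,
            ((P {ω | (⨆ i, X i ω) ≤ x}).toReal - Real.exp (-((T : ℝ) * C * x ^ (-α))))| ≤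
          2 * B * Real.exp (-((T : ℝ) * C / 2) * B ^ (-α)) := by
  have hβ1 : (0:ℝ) < 1 + β := by linarith
  -- T is positive
  have hTpos : (0:ℝ) < T := by
    have h8 : (0:ℝ) < (8 * C) ^ (1 + β) := Real.rpow_pos_of_pos (by linarith) _
    have : (0:ℝ) < (1 / (2 * C')) * max ((2 * C' / C) ^ ((1 + β) / β)) ((8 * C) ^ (1 + β)) := by
      apply mul_pos (by positivity)
      exact lt_of_lt_of_le h8 (le_max_right _ _)
    linarith
  have hTne : T ≠ 0 := by exact_mod_cast hTpos.ne'
  haveI : Nonempty (Fin T) := ⟨⟨0, Nat.pos_of_ne_zero hTne⟩⟩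
  have hu : (0:ℝ) < 2 * C' * T := by positivity
  have hBpos : 0 < B := by rw [hB]; exact Real.rpow_pos_of_pos hu _
  have haane : (1 + β) * α ≠ 0 := by positivity
  -- B ^ ((1+β)α) = 2C'T
  have hBpow : B ^ ((1 + β) * α) = 2 * C' * T := by
    rw [hB, one_div, Real.rpow_inv_rpow hu.le haane]
  -- B ^ (-α)
  have hBα : B ^ (-α) = (2 * C' * T) ^ (-(1 / (1 + β))) := by
    rw [hB, ← Real.rpow_mul hu.le]
    congr 1
    field_simp
  have hBα2 : B ^ (-(α * (1 + β))) = (2 * C' * T)⁻¹ := by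
    rw [hB, ← Real.rpow_mul hu.le]
    rw [show 1 / ((1 + β) * α) * -(α * (1 + β)) = -1 by field_simp]
    rw [Real.rpow_neg_one]
  -- key inequality : (2C'T)^(1/(1+β)) ≤ C*T
  have hkey : (2 * C' * T) ^ ((1:ℝ) / (1 + β)) ≤ C * T := by
    set u : ℝ := 2 * C' * T with hudef
    have hu1 : (2 * C' / C) ^ ((1 + β) / β) ≤ u := by
      have := mul_le_mul_of_nonneg_left hT (by positivity : (0:ℝ) ≤ 2 * C')
      calc (2 * C' / C) ^ ((1 + β) / β)
          ≤ max ((2 * C' / C) ^ ((1 + β) / β)) ((8 * C) ^ (1 + β)) := le_max_left _ _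
        _ = 2 * C' * ((1 / (2 * C')) * max ((2 * C' / C) ^ ((1 + β) / β)) ((8 * C) ^ (1 + β))) := by
            field_simp
        _ ≤ 2 * C' * T := this
    have hbase : (0:ℝ) ≤ 2 * C' / C := by positivity
    have h2 : 2 * C' / C ≤ u ^ (β / (1 + β)) := by
      calc 2 * C' / C = ((2 * C' / C) ^ ((1 + β) / β)) ^ (β / (1 + β)) := by
            rw [← Real.rpow_mul hbase, show (1 + β) / β * (β / (1 + β)) = 1 by field_simp,
              Real.rpow_one]
        _ ≤ u ^ (β / (1 + β)) := Real.rpow_le_rpow (by positivity) hu1 (by positivity)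
    have h3 : u ^ ((1:ℝ) / (1 + β)) * (2 * C' / C) ≤ u ^ ((1:ℝ) / (1 + β)) * u ^ (β / (1 + β)) :=
      mul_le_mul_of_nonneg_left h2 (by positivity)
    have h4 : u ^ ((1:ℝ) / (1 + β)) * u ^ (β / (1 + β)) = u := by
      rw [← Real.rpow_add hu, show (1:ℝ) / (1 + β) + β / (1 + β) = 1 by field_simp, Real.rpow_one]
    set v := u ^ ((1:ℝ) / (1 + β)) with hvdef
    have hvpos : 0 < v := Real.rpow_pos_of_pos hu _
    have h5 : v * (2 * C' / C) ≤ u := by rw [hvdef]; linarith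
    have h6 : v * (2 * C' / C) * (C / (2 * C')) ≤ u * (C / (2 * C')) :=
      mul_le_mul_of_nonneg_right h5 (by positivity)
    have h7 : v * (2 * C' / C) * (C / (2 * C')) = v := by field_simp
    have h8 : u * (C / (2 * C')) = C * T := by rw [hudef]; field_simp
    rw [h7, h8] at h6
    exact h6
  -- consequence : C' * B^(-(α(1+β))) ≤ C/2 * B^(-α)
  have hsecond : C' * B ^ (-(α * (1 + β))) ≤ C / 2 * B ^ (-α) := by
    rw [hBα2, hBα, Real.rpow_neg hu.le]
    have hupow : (0:ℝ) < (2 * C' * T) ^ ((1:ℝ) / (1 + β)) := Real.rpow_pos_of_pos hu _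
    have h1 : ((C * T):ℝ)⁻¹ ≤ ((2 * C' * T) ^ ((1:ℝ) / (1 + β)))⁻¹ :=
      inv_anti₀ hupow hkey
    calc C' * (2 * C' * ↑T)⁻¹ = C / 2 * (C * T)⁻¹ := by field_simp
      _ ≤ C / 2 * ((2 * C' * T) ^ ((1:ℝ) / (1 + β)))⁻¹ :=
          mul_le_mul_of_nonneg_left h1 (by positivity)
  have hBαpos : 0 < B ^ (-α) := Real.rpow_pos_of_pos hBpos _
  -- μ is a probability measure
  haveI hμprob : IsProbabilityMeasure μ := by
    rw [← hmap ⟨0, Nat.pos_of_ne_zero hTne⟩]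
    exact Measure.isProbabilityMeasure_map (hmeas _).aemeasurable
  -- F(B) bound
  have hFB : (μ (Set.Iic B)).toReal ≤ 1 - C / 2 * B ^ (-α) := by
    have hp := hpareto B hBpos
    have := abs_le.mp hp
    linarith
  -- the product formula
  have hProd : ∀ x : ℝ, P {ω | (⨆ i, X i ω) ≤ x} = μ (Set.Iic x) ^ T := by
    intro x
    have hset : {ω | (⨆ i, X i ω) ≤ x} = ⋂ i, X i ⁻¹' Set.Iic x := by
      ext ω
      simp only [Set.mem_setOf_eq, Set.mem_iInter, Set.mem_preimage, Set.mem_Iic]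
      exact ciSup_le_iff (Set.Finite.bddAbove (Set.finite_range _))
    rw [hset, hindep.meas_iInter (fun i => ⟨Set.Iic x, measurableSet_Iic, rfl⟩)]
    have : ∀ i : Fin T, P (X i ⁻¹' Set.Iic x) = μ (Set.Iic x) := by
      intro i
      rw [← hmap i, Measure.map_apply (hmeas i) measurableSet_Iic]
    simp only [this, Finset.prod_const, Finset.card_univ, Fintype.card_fin]
  -- main bound
  have hE : (P {ω | (⨆ i, X i ω) ≤ B}).toReal ≤ Real.exp (-((T : ℝ) * C / 2) * B ^ (-α)) := by
    rw [hProd B, ENNReal.toReal_pow]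
    have h1 : (μ (Set.Iic B)).toReal ≤ Real.exp (-(C / 2 * B ^ (-α))) := by
      calc (μ (Set.Iic B)).toReal ≤ 1 - C / 2 * B ^ (-α) := hFB
        _ = -(C / 2 * B ^ (-α)) + 1 := by ring
        _ ≤ Real.exp (-(C / 2 * B ^ (-α))) := Real.add_one_le_exp _
    calc (μ (Set.Iic B)).toReal ^ T ≤ Real.exp (-(C / 2 * B ^ (-α))) ^ T :=
          pow_le_pow_left₀ ENNReal.toReal_nonneg h1 T
      _ = Real.exp ((T : ℝ) * -(C / 2 * B ^ (-α))) := (Real.exp_nat_mul _ T).symm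
      _ = Real.exp (-((T : ℝ) * C / 2) * B ^ (-α)) := by ring_nf
  refine ⟨⟨hE, ?_⟩, ?_⟩
  · -- the rewriting of the exponent
    congr 1
    rw [hBα, Real.mul_rpow (by positivity) hTpos.le]
    have hTT : (T:ℝ) * (T:ℝ) ^ (-(1 / (1 + β))) = (T:ℝ) ^ (β / (β + 1)) := by
      rw [show (T:ℝ) * (T:ℝ) ^ (-(1 / (1 + β)))
            = (T:ℝ) ^ (1:ℝ) * (T:ℝ) ^ (-(1 / (1 + β))) by rw [Real.rpow_one],
        ← Real.rpow_add hTpos]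
      congr 1
      field_simp
      ring_nf
    calc -((T : ℝ) * C / 2) * ((2 * C') ^ (-(1 / (1 + β))) * (T:ℝ) ^ (-(1 / (1 + β))))
        = -(C / 2 * (2 * C') ^ (-(1 / (1 + β)))) * ((T:ℝ) * (T:ℝ) ^ (-(1 / (1 + β)))) := by ring
      _ = -(C / 2 * (2 * C') ^ (-(1 / (1 + β)))) * (T : ℝ) ^ (β / (β + 1)) := by rw [hTT]
  · -- the integral bound
    set E := Real.exp (-((T : ℝ) * C / 2) * B ^ (-α)) with hEdef
    have hEpos : 0 < E := Real.exp_pos _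
    have hbound : ∀ x ∈ Set.Ioc (0:ℝ) B,
        ‖(P {ω | (⨆ i, X i ω) ≤ x}).toReal - Real.exp (-((T : ℝ) * C * x ^ (-α)))‖ ≤ E := by
      intro x hx
      obtain ⟨hx0, hxB⟩ := hx
      have ha0 : 0 ≤ (P {ω | (⨆ i, X i ω) ≤ x}).toReal := ENNReal.toReal_nonneg
      have haE : (P {ω | (⨆ i, X i ω) ≤ x}).toReal ≤ E := by
        refine le_trans ?_ hE
        apply ENNReal.toReal_mono (measure_ne_top _ _)
        apply measure_mono
        intro ω hω
        exact le_trans hω hxB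
      have hb0 : 0 ≤ Real.exp (-((T : ℝ) * C * x ^ (-α))) := (Real.exp_pos _).le
      have hbE : Real.exp (-((T : ℝ) * C * x ^ (-α))) ≤ E := by
        apply Real.exp_le_exp.mpr
        have hxα : B ^ (-α) ≤ x ^ (-α) :=
          Real.rpow_le_rpow_of_nonpos hx0 hxB (by linarith)
        nlinarith [mul_le_mul_of_nonneg_left hxα (by positivity : (0:ℝ) ≤ (T:ℝ) * C),
          mul_nonneg (by positivity : (0:ℝ) ≤ (T:ℝ) * C) hBαpos.le]
      rw [Real.norm_eq_abs, abs_le]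
      constructor <;> linarith
    have := norm_setIntegral_le_of_norm_le_const_ae' (μ := volume)
      (s := Set.Ioc (0:ℝ) B) (C := E) measure_Ioc_lt_top
      (MeasureTheory.ae_of_all _ hbound)
    rw [Real.norm_eq_abs] at this
    calc |∫ x in Set.Ioc (0 : ℝ) B,
            ((P {ω | (⨆ i, X i ω) ≤ x}).toReal - Real.exp (-((T : ℝ) * C * x ^ (-α))))|
        ≤ E * (volume (Set.Ioc (0:ℝ) B)).toReal := this
      _ = E * B := by rw [Real.volume_Ioc, ENNReal.toReal_ofReal (by linarith)]; ring_nf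
      _ ≤ 2 * B * E := by nlinarith
end

section
/- Consider K arms where, for each k ∈ {1, …, K}, arm k's reward X_k is a nonnegative random variable with (α_k, β_k, C_k, C')-second order Pareto distribution, with α_k > 1 for all k, and suppose there is a unique index k* with α_{k*} < α_k for all k ≠ k*; write α_(1) < α_(2) for the smallest and second-smallest values among α_1, …, α_K. If u > max( 1, (2C' / min_{1≤k≤K} C_k)^(1 / min_{1≤k≤K} β_k), (3 max_{1≤k≤K} C_k / min_{1≤k≤K} C_k)^(1/(α_(2) − α_(1))) ), then for every k ≠ k*, E[ X_{k*} · 1{X_{k*} > u} ] > E[ X_k · 1{X_k > u} ]; that is, k* is the unique maximizer of k ↦ E[ X_k · 1{X_k > u} ]. -/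
open MeasureTheory ProbabilityTheory Real

lemma tail_bounds (μ : Measure ℝ) [IsProbabilityMeasure μ] {α β C C' : ℝ}
    (hp : IsSecondOrderPareto μ α β C C')
    {t : ℝ} (ht : 0 < t) (hhalf : C' * t ^ (-(α * (1 + β))) ≤ C / 2 * t ^ (-α)) :
    C / 2 * t ^ (-α) ≤ (μ (Set.Ioi t)).toReal ∧
      (μ (Set.Ioi t)).toReal ≤ 3 / 2 * C * t ^ (-α) := by
  have hF := hp t ht
  have habs := abs_le.mp (hF.trans hhalf)
  have hIoi : (μ (Set.Ioi t)).toReal = 1 - (μ (Set.Iic t)).toReal := by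
    rw [← Set.compl_Iic, prob_compl_eq_one_sub measurableSet_Iic,
      ENNReal.toReal_sub_of_le prob_le_one ENNReal.one_ne_top]
    simp
  constructor <;> rw [hIoi] <;> linarith [habs.1, habs.2]

lemma integral_tail_bounds (μ : Measure ℝ) [IsProbabilityMeasure μ] {α β C C' u : ℝ}
    (hα : 1 < α) (hC : 0 < C)
    (hp : IsSecondOrderPareto μ α β C C')
    (hu : 0 < u)
    (hhalf : ∀ t, u ≤ t → C' * t ^ (-(α * (1 + β))) ≤ C / 2 * t ^ (-α)) :
    C / 2 * (u ^ (1 - α) * (α / (α - 1))) ≤ ∫ x in Set.Ioi u, x ∂μ ∧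
      ∫ x in Set.Ioi u, x ∂μ ≤ 3 / 2 * C * (u ^ (1 - α) * (α / (α - 1))) := by
  have hα1 : α - 1 ≠ 0 := by linarith
  -- the tail bound available at every point `max t u`
  have htail : ∀ t : ℝ, C / 2 * (max t u) ^ (-α) ≤ (μ (Set.Ioi (max t u))).toReal ∧
      (μ (Set.Ioi (max t u))).toReal ≤ 3 / 2 * C * (max t u) ^ (-α) := fun t =>
    tail_bounds μ hp (lt_of_lt_of_le hu (le_max_right t u)) (hhalf _ (le_max_right t u))
  -- layer cake
  have hnn : 0 ≤ᵐ[μ.restrict (Set.Ioi u)] (fun x : ℝ => x) :=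
    ae_restrict_of_forall_mem measurableSet_Ioi (fun x hx => (hu.trans hx).le)
  have layer : ∫⁻ x, ENNReal.ofReal x ∂(μ.restrict (Set.Ioi u)) =
      ∫⁻ t in Set.Ioi (0:ℝ), μ (Set.Ioi (max t u)) := by
    rw [lintegral_eq_lintegral_meas_lt _ hnn aemeasurable_id]
    refine lintegral_congr fun t => ?_
    have : {a : ℝ | t < a} = Set.Ioi t := rfl
    rw [this, Measure.restrict_apply measurableSet_Ioi, Set.Ioi_inter_Ioi]
  set L := ∫⁻ t in Set.Ioi (0:ℝ), μ (Set.Ioi (max t u)) with hL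
  -- integrability of the bounding function
  have hsplit : Set.Ioc (0:ℝ) u ∪ Set.Ioi u = Set.Ioi 0 := Set.Ioc_union_Ioi_eq_Ioi hu.le
  have hint : IntegrableOn (fun t : ℝ => (max t u) ^ (-α)) (Set.Ioi 0) := by
    rw [← hsplit]
    apply IntegrableOn.union
    · have : Set.EqOn (fun _ : ℝ => u ^ (-α)) (fun t : ℝ => (max t u) ^ (-α))
          (Set.Ioc (0:ℝ) u) := fun t ht => by simp [max_eq_right ht.2]
      exact (integrableOn_const measure_Ioc_lt_top.ne).congr_fun this
        measurableSet_Ioc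
    · have : Set.EqOn (fun t : ℝ => t ^ (-α)) (fun t : ℝ => (max t u) ^ (-α))
          (Set.Ioi u) := fun t ht => by simp [max_eq_left (le_of_lt (Set.mem_Ioi.mp ht))]
      exact (integrableOn_Ioi_rpow_of_lt (by linarith) hu).congr_fun this measurableSet_Ioi
  -- value of the bounding integral
  have hval : ∫ t in Set.Ioi (0:ℝ), (max t u) ^ (-α) = u ^ (1 - α) * (α / (α - 1)) := by
    rw [← hsplit, setIntegral_union (Set.Ioc_disjoint_Ioi le_rfl) measurableSet_Ioi
      (by rw [← hsplit] at hint; exact hint.mono_set Set.subset_union_left)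
      (by rw [← hsplit] at hint; exact hint.mono_set Set.subset_union_right)]
    have h1 : ∫ t in Set.Ioc (0:ℝ) u, (max t u) ^ (-α) = u * u ^ (-α) := by
      have he : Set.EqOn (fun t : ℝ => (max t u) ^ (-α)) (fun _ : ℝ => u ^ (-α))
          (Set.Ioc (0:ℝ) u) := fun t ht => by simp [max_eq_right ht.2]
      rw [setIntegral_congr_fun measurableSet_Ioc he]
      simp [Real.volume_Ioc, ENNReal.toReal_ofReal hu.le, hu.le]
    have h2 : ∫ t in Set.Ioi u, (max t u) ^ (-α) = -u ^ (-α + 1) / (-α + 1) := by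
      have he : Set.EqOn (fun t : ℝ => (max t u) ^ (-α)) (fun t : ℝ => t ^ (-α))
          (Set.Ioi u) := fun t ht => by simp [max_eq_left (le_of_lt (Set.mem_Ioi.mp ht))]
      rw [setIntegral_congr_fun measurableSet_Ioi he]
      exact integral_Ioi_rpow_of_lt (by linarith) hu
    rw [h1, h2]
    have e1 : u ^ (1 - α) = u * u ^ (-α) := by
      rw [show (1:ℝ) - α = 1 + (-α) by ring, rpow_add hu, rpow_one]
    have e2 : u ^ (-α + 1) = u ^ (1 - α) := by ring_nf
    rw [e2, ← e1]
    have hne1 : -α + 1 ≠ 0 := by intro h; linarith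
    have hne2 : α - 1 ≠ 0 := hα1
    field_simp
    ring
  have hUnn : (0:ℝ) ≤ u ^ (1 - α) * (α / (α - 1)) := by
    apply mul_nonneg (rpow_nonneg hu.le _)
    apply div_nonneg <;> linarith
  -- upper bound for L
  have hupper : L ≤ ENNReal.ofReal (3 / 2 * C * (u ^ (1 - α) * (α / (α - 1)))) := by
    have step1 : L ≤ ∫⁻ t in Set.Ioi (0:ℝ),
        ENNReal.ofReal (3 / 2 * C * (max t u) ^ (-α)) := by
      refine lintegral_mono fun t => ?_
      rw [← ENNReal.ofReal_toReal (measure_ne_top μ (Set.Ioi (max t u)))]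
      exact ENNReal.ofReal_le_ofReal (htail t).2
    have step2 : ∫⁻ t in Set.Ioi (0:ℝ), ENNReal.ofReal (3 / 2 * C * (max t u) ^ (-α)) =
        ENNReal.ofReal (∫ t in Set.Ioi (0:ℝ), 3 / 2 * C * (max t u) ^ (-α)) := by
      rw [ofReal_integral_eq_lintegral_ofReal (hint.const_mul _)
        (Filter.Eventually.of_forall fun t => by positivity)]
    rw [step2, integral_const_mul, hval] at step1
    exact step1
  have hLne : L ≠ ⊤ := (lt_of_le_of_lt hupper ENNReal.ofReal_lt_top).ne
  -- lower bound for L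
  have hlower : ENNReal.ofReal (C / 2 * (u ^ (1 - α) * (α / (α - 1)))) ≤ L := by
    have step2 : ∫⁻ t in Set.Ioi (0:ℝ), ENNReal.ofReal (C / 2 * (max t u) ^ (-α)) =
        ENNReal.ofReal (∫ t in Set.Ioi (0:ℝ), C / 2 * (max t u) ^ (-α)) := by
      rw [ofReal_integral_eq_lintegral_ofReal (hint.const_mul _)
        (Filter.Eventually.of_forall fun t => by positivity)]
    have step1 : ∫⁻ t in Set.Ioi (0:ℝ),
        ENNReal.ofReal (C / 2 * (max t u) ^ (-α)) ≤ L := by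
      refine lintegral_mono fun t => ?_
      rw [← ENNReal.ofReal_toReal (measure_ne_top μ (Set.Ioi (max t u)))]
      exact ENNReal.ofReal_le_ofReal (htail t).1
    rw [step2, integral_const_mul, hval] at step1
    exact step1
  -- identify the integral
  have hI : ∫ x in Set.Ioi u, x ∂μ = L.toReal := by
    rw [integral_eq_lintegral_of_nonneg_ae hnn aestronglyMeasurable_id, layer]
  rw [hI]
  constructor
  · exact (ENNReal.ofReal_le_iff_le_toReal hLne).mp hlower
  · exact ENNReal.toReal_le_of_le_ofReal (by positivity) hupper

theorem truncated_mean_optimal_arm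
    {Ω : Type*} [MeasurableSpace Ω] (P : Measure Ω) [IsProbabilityMeasure P]
    (K : ℕ) (α β C : Fin K → ℝ) (C' : ℝ)
    (hα : ∀ k, 1 < α k) (hβ : ∀ k, 0 < β k) (hC : ∀ k, 0 < C k) (hC' : 0 < C')
    (kstar : Fin K) (hkstar : ∀ k, k ≠ kstar → α kstar < α k)
    (hne : ((Finset.univ : Finset (Fin K)).erase kstar).Nonempty)
    (X : Fin K → Ω → ℝ)
    (hmeas : ∀ k, Measurable (X k)) (hnonneg : ∀ k ω, 0 ≤ X k ω)
    (hpareto : ∀ k, IsSecondOrderPareto (P.map (X k)) (α k) (β k) (C k) C')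
    (u : ℝ)
    (hu : max (max 1
        ((2 * C' / ((Finset.univ : Finset (Fin K)).inf' ⟨kstar, Finset.mem_univ kstar⟩ C))
          ^ (1 / ((Finset.univ : Finset (Fin K)).inf' ⟨kstar, Finset.mem_univ kstar⟩ β))))
        ((3 * ((Finset.univ : Finset (Fin K)).sup' ⟨kstar, Finset.mem_univ kstar⟩ C) /
            ((Finset.univ : Finset (Fin K)).inf' ⟨kstar, Finset.mem_univ kstar⟩ C))
          ^ (1 / (((Finset.univ : Finset (Fin K)).erase kstar).inf' hne α - α kstar)))
        < u) :
    ∀ k, k ≠ kstar →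
      (∫ ω in {ω | u < X k ω}, X k ω ∂P) < ∫ ω in {ω | u < X kstar ω}, X kstar ω ∂P := by
  -- notation
  set Cmin := ((Finset.univ : Finset (Fin K)).inf' ⟨kstar, Finset.mem_univ kstar⟩ C) with hCmin'
  set bmin := ((Finset.univ : Finset (Fin K)).inf' ⟨kstar, Finset.mem_univ kstar⟩ β) with hbmin'
  set Cmax := ((Finset.univ : Finset (Fin K)).sup' ⟨kstar, Finset.mem_univ kstar⟩ C) with hCmax'
  set A2 := (((Finset.univ : Finset (Fin K)).erase kstar).inf' hne α) with hA2'
  rw [max_lt_iff, max_lt_iff] at hu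
  obtain ⟨⟨hu1, hu2⟩, hu3⟩ := hu
  have hu0 : (0:ℝ) < u := lt_trans one_pos hu1
  have hCminpos : 0 < Cmin := by
    rw [hCmin']; exact (Finset.lt_inf'_iff (H := _)).mpr fun k _ => hC k
  have hbminpos : 0 < bmin := by
    rw [hbmin']; exact (Finset.lt_inf'_iff (H := _)).mpr fun k _ => hβ k
  have hCmaxpos : 0 < Cmax := lt_of_lt_of_le (hC kstar)
    (Finset.le_sup' C (Finset.mem_univ kstar))
  -- `A2 > α kstar`
  have hA2gt : α kstar < A2 := by
    obtain ⟨j, hj, hjeq⟩ := Finset.exists_mem_eq_inf'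
      (H := hne) α
    rw [hA2', hjeq]
    exact hkstar j (Finset.ne_of_mem_erase hj)
  -- the "half" condition for each arm
  have hhalf : ∀ k, ∀ t, u ≤ t →
      C' * t ^ (-(α k * (1 + β k))) ≤ C k / 2 * t ^ (-(α k)) := by
    intro k t hut
    have ht0 : (0:ℝ) < t := lt_of_lt_of_le hu0 hut
    have hab : 0 < α k * β k := mul_pos (lt_trans one_pos (hα k)) (hβ k)
    -- `2 C' / Cmin < t ^ (α k * β k)`
    have key : 2 * C' / Cmin < t ^ (α k * β k) := by
      have hbase : (0:ℝ) ≤ 2 * C' / Cmin := div_nonneg (by linarith) hCminpos.le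
      have h1 : (2 * C' / Cmin) < u ^ bmin := by
        have := Real.rpow_lt_rpow (Real.rpow_nonneg hbase _) hu2 hbminpos
        rwa [← Real.rpow_mul hbase, one_div,
          inv_mul_cancel₀ hbminpos.ne', Real.rpow_one] at this
      have h2 : u ^ bmin ≤ u ^ (α k * β k) := by
        apply Real.rpow_le_rpow_of_exponent_le hu1.le
        calc bmin ≤ β k := Finset.inf'_le β (Finset.mem_univ k)
          _ ≤ α k * β k := le_mul_of_one_le_left (hβ k).le (hα k).le
      have h3 : u ^ (α k * β k) ≤ t ^ (α k * β k) :=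
        Real.rpow_le_rpow hu0.le hut hab.le
      linarith
    have hT : (0:ℝ) < t ^ (α k * β k) := Real.rpow_pos_of_pos ht0 _
    have h2C' : 2 * C' < Cmin * t ^ (α k * β k) := by
      rw [div_lt_iff₀ hCminpos] at key; linarith
    have hCk : Cmin ≤ C k := Finset.inf'_le C (Finset.mem_univ k)
    have hTα : (0:ℝ) < t ^ (-(α k)) := Real.rpow_pos_of_pos ht0 _
    have hsplit : t ^ (-(α k * (1 + β k))) = t ^ (-(α k)) * t ^ (-(α k * β k)) := by
      rw [← Real.rpow_add ht0]; ring_nf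
    rw [hsplit, Real.rpow_neg ht0.le (α k * β k)]
    rw [show C' * (t ^ (-(α k)) * (t ^ (α k * β k))⁻¹) =
      (C' * (t ^ (α k * β k))⁻¹) * t ^ (-(α k)) by ring]
    apply mul_le_mul_of_nonneg_right _ hTα.le
    rw [show C' * (t ^ (α k * β k))⁻¹ = C' / (t ^ (α k * β k)) by ring, div_le_iff₀ hT]
    nlinarith
  -- per-arm integral bounds
  have hmap : ∀ k, (∫ ω in {ω | u < X k ω}, X k ω ∂P) =
      ∫ x in Set.Ioi u, x ∂(P.map (X k)) := by
    intro k
    have h := setIntegral_map (μ := P) (g := X k) (f := fun x : ℝ => x) (s := Set.Ioi u)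
      measurableSet_Ioi measurable_id.aestronglyMeasurable (hmeas k).aemeasurable
    exact h.symm
  have hbounds : ∀ k,
      C k / 2 * (u ^ (1 - α k) * (α k / (α k - 1))) ≤ ∫ x in Set.Ioi u, x ∂(P.map (X k)) ∧
      (∫ x in Set.Ioi u, x ∂(P.map (X k))) ≤
        3 / 2 * C k * (u ^ (1 - α k) * (α k / (α k - 1))) := by
    intro k
    have : IsProbabilityMeasure (P.map (X k)) :=
      Measure.isProbabilityMeasure_map (hmeas k).aemeasurable
    exact integral_tail_bounds (P.map (X k)) (hα k) (hC k) (hpareto k) hu0 (hhalf k)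
  intro k hk
  rw [hmap k, hmap kstar]
  refine lt_of_le_of_lt (hbounds k).2 (lt_of_lt_of_le ?_ (hbounds kstar).1)
  -- the key strict inequality
  have hd : 0 < A2 - α kstar := by linarith
  have hukey : 3 * Cmax / Cmin < u ^ (A2 - α kstar) := by
    have hbase : (0:ℝ) ≤ 3 * Cmax / Cmin := div_nonneg (by linarith) hCminpos.le
    have := Real.rpow_lt_rpow (Real.rpow_nonneg hbase _) hu3 hd
    rwa [← Real.rpow_mul hbase, one_div,
      inv_mul_cancel₀ hd.ne', Real.rpow_one] at this
  have hexp : u ^ (A2 - α kstar) ≤ u ^ (α k - α kstar) := by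
    apply Real.rpow_le_rpow_of_exponent_le hu1.le
    have : A2 ≤ α k := Finset.inf'_le α (Finset.mem_erase.mpr ⟨hk, Finset.mem_univ k⟩)
    linarith
  have hCmaxk : C k ≤ Cmax := Finset.le_sup' C (Finset.mem_univ k)
  have hCminstar : Cmin ≤ C kstar := Finset.inf'_le C (Finset.mem_univ kstar)
  -- `3 * C k * u ^ (1 - α k) < C kstar * u ^ (1 - α kstar)`
  have hkey : 3 * C k * u ^ (1 - α k) < C kstar * u ^ (1 - α kstar) := by
    have hue : u ^ (1 - α kstar) = u ^ (1 - α k) * u ^ (α k - α kstar) := by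
      rw [← Real.rpow_add hu0]; ring_nf
    have hUpos : (0:ℝ) < u ^ (1 - α k) := Real.rpow_pos_of_pos hu0 _
    rw [hue, ← mul_assoc]
    have h3 : 3 * C k < C kstar * u ^ (α k - α kstar) := by
      have h4 : 3 * Cmax < Cmin * u ^ (α k - α kstar) := by
        rw [div_lt_iff₀ hCminpos] at hukey
        have := lt_of_lt_of_le hukey (mul_le_mul_of_nonneg_right hexp hCminpos.le)
        linarith [mul_comm (u ^ (α k - α kstar)) Cmin]
      have hupos : (0:ℝ) < u ^ (α k - α kstar) := Real.rpow_pos_of_pos hu0 _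
      nlinarith
    calc 3 * C k * u ^ (1 - α k) < (C kstar * u ^ (α k - α kstar)) * u ^ (1 - α k) := by
          exact mul_lt_mul_of_pos_right h3 hUpos
      _ = C kstar * u ^ (1 - α k) * u ^ (α k - α kstar) := by ring
  -- ratio monotonicity
  have hr : α k / (α k - 1) ≤ α kstar / (α kstar - 1) := by
    have h1 : (0:ℝ) < α k - 1 := by linarith [hα k]
    have h2 : (0:ℝ) < α kstar - 1 := by linarith [hα kstar]
    rw [div_le_div_iff₀ h1 h2]
    nlinarith [hkstar k hk]
  have hrpos : 0 < α k / (α k - 1) := by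
    have h1 : (0:ℝ) < α k - 1 := by linarith [hα k]
    have h2 : (0:ℝ) < α k := by linarith [hα k]
    exact div_pos h2 h1
  have hbpos : (0:ℝ) < C kstar * u ^ (1 - α kstar) :=
    mul_pos (hC kstar) (Real.rpow_pos_of_pos hu0 _)
  nlinarith [mul_lt_mul_of_pos_right hkey hrpos,
    mul_le_mul_of_nonneg_left hr hbpos.le]
end

section
/- Let α > 1, β, C, C' > 0 with α(1+β) > 1, and let X be a nonnegative random variable with (α, β, C, C')-second order Pareto distribution. Then for every u > 0, M − Δ ≤ E[ X · 1{X > u} ] ≤ M + Δ, where M = (C α / (α − 1)) u^(−α+1) and Δ = (C' α(1+β) / (α(1+β) − 1)) u^(−α(1+β)+1). -/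
open MeasureTheory ProbabilityTheory Real

theorem truncated_mean_bounds
    {Ω : Type*} [MeasurableSpace Ω] (P : Measure Ω) [IsProbabilityMeasure P]
    (α β C C' : ℝ) (hα : 1 < α) (hβ : 0 < β) (hC : 0 < C) (hC' : 0 < C')
    (hαβ : 1 < α * (1 + β))
    (X : Ω → ℝ) (hmeas : Measurable X) (hnonneg : ∀ ω, 0 ≤ X ω)
    (hpareto : IsSecondOrderPareto (P.map X) α β C C')
    (u : ℝ) (hu : 0 < u) :
    C * α / (α - 1) * u ^ (-α + 1)
        - C' * (α * (1 + β)) / (α * (1 + β) - 1) * u ^ (-(α * (1 + β)) + 1)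
      ≤ (∫ ω in {ω | u < X ω}, X ω ∂P) ∧
    (∫ ω in {ω | u < X ω}, X ω ∂P)
      ≤ C * α / (α - 1) * u ^ (-α + 1)
        + C' * (α * (1 + β)) / (α * (1 + β) - 1) * u ^ (-(α * (1 + β)) + 1) := by
  set γ : ℝ := α * (1 + β) with hγdef
  have hγ : 1 < γ := hαβ
  set μ : Measure ℝ := P.map X with hμdef
  haveI : IsProbabilityMeasure μ := Measure.isProbabilityMeasure_map hmeas.aemeasurable
  set S : ℝ → ℝ := fun t => (μ (Set.Ioi t)).toReal with hSdef
  -- tail = 1 - cdf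
  have htail : ∀ t : ℝ, S t = 1 - (μ (Set.Iic t)).toReal := by
    intro t
    show (μ (Set.Ioi t)).toReal = _
    rw [← Set.compl_Iic, prob_compl_eq_one_sub measurableSet_Iic,
      ENNReal.toReal_sub_of_le prob_le_one ENNReal.one_ne_top, ENNReal.toReal_one]
  -- the key estimate on S
  have hS : ∀ t : ℝ, 0 < t → |S t - C * t ^ (-α)| ≤ C' * t ^ (-γ) := by
    intro t ht
    have h := hpareto t ht
    have : 1 - C * t ^ (-α) - (μ (Set.Iic t)).toReal = S t - C * t ^ (-α) := by
      rw [htail]; ring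
    rwa [this] at h
  have hSub : ∀ t : ℝ, 0 < t → S t ≤ C * t ^ (-α) + C' * t ^ (-γ) := by
    intro t ht
    have := (abs_le.1 (hS t ht)).2; linarith
  have hSlb : ∀ t : ℝ, 0 < t → C * t ^ (-α) - C' * t ^ (-γ) ≤ S t := by
    intro t ht
    have := (abs_le.1 (hS t ht)).1; linarith
  have hSnn : ∀ t : ℝ, 0 ≤ S t := fun t => ENNReal.toReal_nonneg
  -- measurability/integrability of S on Ioi u
  have hSanti : Antitone S := by
    intro a b hab
    exact ENNReal.toReal_mono (measure_ne_top μ _) (measure_mono (Set.Ioi_subset_Ioi hab))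
  have hSmeas : Measurable S := hSanti.measurable
  have hα1 : (-α : ℝ) < -1 := by linarith
  have hγ1 : (-γ : ℝ) < -1 := by linarith
  have hint1 : IntegrableOn (fun t : ℝ => C * t ^ (-α)) (Set.Ioi u) :=
    (integrableOn_Ioi_rpow_of_lt hα1 hu).const_mul C
  have hint2 : IntegrableOn (fun t : ℝ => C' * t ^ (-γ)) (Set.Ioi u) :=
    (integrableOn_Ioi_rpow_of_lt hγ1 hu).const_mul C'
  have hintg : IntegrableOn (fun t : ℝ => C * t ^ (-α) + C' * t ^ (-γ)) (Set.Ioi u) :=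
    hint1.add hint2
  have hintS : IntegrableOn S (Set.Ioi u) := by
    refine Integrable.mono hintg hSmeas.aestronglyMeasurable ?_
    filter_upwards [ae_restrict_mem measurableSet_Ioi] with t ht
    have ht0 : 0 < t := hu.trans ht
    rw [Real.norm_of_nonneg (hSnn t), Real.norm_of_nonneg]
    · exact hSub t ht0
    · positivity
  -- layer cake
  have hsetmeas : MeasurableSet {ω | u < X ω} := measurableSet_lt measurable_const hmeas
  set Y : Ω → ℝ := fun ω => Set.indicator {ω | u < X ω} X ω with hYdef
  have hYmeas : Measurable Y := hmeas.indicator hsetmeas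
  have hYnn : ∀ ω, 0 ≤ Y ω := by
    intro ω
    by_cases h : ω ∈ {ω | u < X ω}
    · rw [hYdef]; simp only [Set.indicator_of_mem h]; exact hnonneg ω
    · rw [hYdef]; simp [Set.indicator_of_notMem h]
  have hI1 : (∫ ω in {ω | u < X ω}, X ω ∂P) = ∫ ω, Y ω ∂P := by
    rw [hYdef, integral_indicator hsetmeas]
  have hI2 : (∫ ω, Y ω ∂P) = (∫⁻ ω, ENNReal.ofReal (Y ω) ∂P).toReal := by
    rw [integral_eq_lintegral_of_nonneg_ae (Filter.Eventually.of_forall hYnn)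
      hYmeas.aestronglyMeasurable]
  have hlc : (∫⁻ ω, ENNReal.ofReal (Y ω) ∂P) = ∫⁻ t in Set.Ioi 0, P {a | t < Y a} :=
    lintegral_eq_lintegral_meas_lt P (Filter.Eventually.of_forall hYnn)
      hYmeas.aemeasurable
  -- identify the level sets
  have hlev1 : ∀ t : ℝ, 0 < t → t ≤ u → {a | t < Y a} = {a | u < X a} := by
    intro t ht htu
    ext a
    simp only [Set.mem_setOf_eq, hYdef]
    by_cases h : a ∈ {ω | u < X ω}
    · simp only [Set.indicator_of_mem h]
      exact ⟨fun _ => h, fun h' => lt_of_le_of_lt htu h⟩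
    · simp only [Set.indicator_of_notMem h]
      constructor
      · intro h'; exact absurd h' ht.not_gt
      · intro h'; exact absurd h' h
  have hlev2 : ∀ t : ℝ, u < t → {a | t < Y a} = {a | t < X a} := by
    intro t htu
    ext a
    simp only [Set.mem_setOf_eq, hYdef]
    by_cases h : a ∈ {ω | u < X ω}
    · simp [Set.indicator_of_mem h]
    · simp only [Set.indicator_of_notMem h]
      constructor
      · intro h'; exact absurd h' (hu.trans htu).not_gt
      · intro h'
        exact absurd (htu.trans h') h
  have hmap : ∀ t : ℝ, μ (Set.Ioi t) = P {a | t < X a} := by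
    intro t
    rw [hμdef, Measure.map_apply hmeas measurableSet_Ioi]
    rfl
  -- split the t-integral
  have hsplit : (∫⁻ t in Set.Ioi 0, P {a | t < Y a})
      = μ (Set.Ioi u) * ENNReal.ofReal u + ∫⁻ t in Set.Ioi u, μ (Set.Ioi t) := by
    rw [← Set.Ioc_union_Ioi_eq_Ioi hu.le,
      lintegral_union measurableSet_Ioi Set.Ioc_disjoint_Ioi_same]
    congr 1
    · have : ∀ t ∈ Set.Ioc (0:ℝ) u, P {a | t < Y a} = μ (Set.Ioi u) := by
        intro t ht
        rw [hlev1 t ht.1 ht.2, hmap]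
      rw [setLIntegral_congr_fun measurableSet_Ioc this,
        setLIntegral_const, Real.volume_Ioc, sub_zero]
    · refine setLIntegral_congr_fun measurableSet_Ioi ?_
      intro t ht
      show P {a | t < Y a} = μ (Set.Ioi t)
      rw [hlev2 t ht, hmap]
  -- convert to real integrals
  have hofS : ∀ t : ℝ, μ (Set.Ioi t) = ENNReal.ofReal (S t) :=
    fun t => (ENNReal.ofReal_toReal (measure_ne_top μ _)).symm
  have hIioi : (∫⁻ t in Set.Ioi u, μ (Set.Ioi t)) = ENNReal.ofReal (∫ t in Set.Ioi u, S t) := by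
    rw [ofReal_integral_eq_lintegral_ofReal hintS
      (Filter.Eventually.of_forall (fun t => hSnn t))]
    exact lintegral_congr (fun t => hofS t)
  have hIS : (∫ ω in {ω | u < X ω}, X ω ∂P) = S u * u + ∫ t in Set.Ioi u, S t := by
    rw [hI1, hI2, hlc, hsplit, hIioi, hofS u, ← ENNReal.ofReal_mul (hSnn u),
      ← ENNReal.ofReal_add (mul_nonneg (hSnn u) hu.le)
        (integral_nonneg (fun t => hSnn t)),
      ENNReal.toReal_ofReal]
    exact add_nonneg (mul_nonneg (hSnn u) hu.le) (integral_nonneg (fun t => hSnn t))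
  -- compute model integrals
  have hiα : (∫ t in Set.Ioi u, C * t ^ (-α)) = C / (α - 1) * u ^ (-α + 1) := by
    rw [MeasureTheory.integral_const_mul, integral_Ioi_rpow_of_lt hα1 hu]
    have e : (-α + 1) = -(α - 1) := by ring
    rw [e, div_neg, neg_div, neg_neg, div_eq_mul_inv, div_eq_mul_inv]
    ring
  have hiγ : (∫ t in Set.Ioi u, C' * t ^ (-γ)) = C' / (γ - 1) * u ^ (-γ + 1) := by
    rw [MeasureTheory.integral_const_mul, integral_Ioi_rpow_of_lt hγ1 hu]
    have e : (-γ + 1) = -(γ - 1) := by ring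
    rw [e, div_neg, neg_div, neg_neg, div_eq_mul_inv, div_eq_mul_inv]
    ring
  -- monotone comparison of integrals
  have hIub : (∫ t in Set.Ioi u, S t)
      ≤ C / (α - 1) * u ^ (-α + 1) + C' / (γ - 1) * u ^ (-γ + 1) := by
    rw [← hiα, ← hiγ, ← integral_add hint1 hint2]
    refine setIntegral_mono_on hintS hintg measurableSet_Ioi ?_
    intro t ht
    exact hSub t (hu.trans ht)
  have hIlb : C / (α - 1) * u ^ (-α + 1) - C' / (γ - 1) * u ^ (-γ + 1)
      ≤ ∫ t in Set.Ioi u, S t := by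
    rw [← hiα, ← hiγ, ← integral_sub hint1 hint2]
    refine setIntegral_mono_on (hint1.sub hint2) hintS measurableSet_Ioi ?_
    intro t ht
    exact hSlb t (hu.trans ht)
  -- bounds on the boundary term
  have hup1 : u ^ (-α + 1) = u ^ (-α) * u := by
    rw [← Real.rpow_add_one hu.ne' (-α)]
  have hup2 : u ^ (-γ + 1) = u ^ (-γ) * u := by
    rw [← Real.rpow_add_one hu.ne' (-γ)]
  have hBub : S u * u ≤ C * u ^ (-α + 1) + C' * u ^ (-γ + 1) := by
    rw [hup1, hup2]
    have := hSub u hu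
    nlinarith [hu]
  have hBlb : C * u ^ (-α + 1) - C' * u ^ (-γ + 1) ≤ S u * u := by
    rw [hup1, hup2]
    have := hSlb u hu
    nlinarith [hu]
  -- conclude
  have hα0 : α - 1 ≠ 0 := by intro h; linarith
  have hγ0 : γ - 1 ≠ 0 := by intro h; linarith
  have hid1 : C * u ^ (-α + 1) + C / (α - 1) * u ^ (-α + 1)
      = C * α / (α - 1) * u ^ (-α + 1) := by
    rw [div_eq_mul_inv, div_eq_mul_inv]
    have h1 : (α - 1) * (α - 1)⁻¹ = 1 := mul_inv_cancel₀ hα0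
    linear_combination (-(C * u ^ (-α + 1))) * h1
  have hid2 : C' * u ^ (-γ + 1) + C' / (γ - 1) * u ^ (-γ + 1)
      = C' * γ / (γ - 1) * u ^ (-γ + 1) := by
    rw [div_eq_mul_inv, div_eq_mul_inv]
    have h1 : (γ - 1) * (γ - 1)⁻¹ = 1 := mul_inv_cancel₀ hγ0
    linear_combination (-(C' * u ^ (-γ + 1))) * h1
  constructor
  · rw [hIS]
    linarith [hBlb, hIlb, hid1, hid2]
  · rw [hIS]
    linarith [hBub, hIub, hid1, hid2]
end

section
/- Consider K arms where, for each k ∈ {1, …, K}, the samples (X_{k,i})_i are i.i.d. with (α_k, β_k, C_k, C')-second order Pareto distribution, all samples across arms being mutually independent, and let k* be an index with α_{k*} < α_k for all k ≠ k*. Let δ ∈ (0,1), let M and N be positive integers, and set ℓ = (M C_{k*} / (2 log(1/δ)))^(1/α_{k*}) and, for each k ≠ k*, L_k = (4 N C_k / log(1/(1−δ)))^(1/α_k). Assume C_{k*} ℓ^(−α_{k*}) ≥ 2 C' ℓ^(−α_{k*}(1+β_{k*})), and for each k ≠ k*: C_k L_k^(−α_k) ≥ C' L_k^(−α_k(1+β_k)),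 L_k^(−α_k) ≤ 1/(4 C_k), and L_k ≤ ℓ. Then P( max_{k ≠ k*} max_{1≤i≤N} X_{k,i} ≤ max_{1≤i≤M} X_{k*,i} ) ≥ 1 − K δ. -/
open MeasureTheory ProbabilityTheory Real
open scoped ENNReal

lemma exp_le_one_sub_aux {x : ℝ} (h0 : 0 ≤ x) (h2 : x ≤ 1/2) :
    Real.exp (-(2*x)) ≤ 1 - x := by
  have h := Real.add_one_le_exp (2*x)
  have e1 : Real.exp (-(2*x)) * (1 + 2*x) ≤ Real.exp (-(2*x)) * Real.exp (2*x) :=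
    mul_le_mul_of_nonneg_left (by linarith) (Real.exp_pos _).le
  rw [← Real.exp_add, neg_add_cancel, Real.exp_zero] at e1
  nlinarith [Real.exp_pos (-(2*x)), mul_nonneg h0 (by linarith : (0:ℝ) ≤ 1 - 2*x)]

lemma pow_le_exp_aux {F c : ℝ} (M : ℕ) (hF0 : 0 ≤ F) (hF : F ≤ 1 - c) :
    F ^ M ≤ Real.exp (-((M:ℝ) * c)) := by
  calc F ^ M ≤ (1 - c) ^ M := pow_le_pow_left₀ hF0 hF M
    _ ≤ (Real.exp (-c)) ^ M :=
        pow_le_pow_left₀ (by linarith) (by linarith [Real.add_one_le_exp (-c)]) M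
    _ = Real.exp (-((M:ℝ) * c)) := by rw [← Real.exp_nat_mul]; congr 1; ring

lemma exp_le_pow_aux {F x : ℝ} (N : ℕ) (h0 : 0 ≤ x) (h2 : x ≤ 1/2) (hF : 1 - x ≤ F) :
    Real.exp (-(2*(N:ℝ)*x)) ≤ F ^ N := by
  calc Real.exp (-(2*(N:ℝ)*x)) = (Real.exp (-(2*x)))^N := by
        rw [← Real.exp_nat_mul]; congr 1; ring
    _ ≤ (1-x)^N := pow_le_pow_left₀ (Real.exp_pos _).le (exp_le_one_sub_aux h0 h2) N
    _ ≤ F^N := pow_le_pow_left₀ (by linarith) hF N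

lemma meas_iInter_pareto {Ω : Type*} [MeasurableSpace Ω] (P : Measure Ω)
    {K : ℕ} {n : Fin K → ℕ} (X : (k : Fin K) → Fin (n k) → Ω → ℝ)
    (hindep : iIndepFun
      (fun p : Σ k : Fin K, Fin (n k) => X p.1 p.2) P)
    (k : Fin K) (t : ℝ) :
    P (⋂ i, (X k i)⁻¹' (Set.Iic t)) = ∏ i : Fin (n k), P ((X k i)⁻¹' (Set.Iic t)) := by
  have h := hindep.measure_inter_preimage_eq_mul
    (Finset.univ.map (Function.Embedding.sigmaMk (β := fun k => Fin (n k)) k))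
    (sets := fun _ => Set.Iic t) (fun i _ => measurableSet_Iic)
  simp only [Finset.prod_map, Function.Embedding.sigmaMk_apply] at h
  change _ = ∏ i : Fin (n k), P ((X k i)⁻¹' Set.Iic t) at h
  rw [← h]
  congr 1
  ext ω
  simp only [Set.mem_iInter, Finset.mem_map, Finset.mem_univ, Function.Embedding.sigmaMk_apply,
    true_and, Set.mem_preimage]
  constructor
  · rintro h p ⟨i, rfl⟩; exact h i
  · rintro h i; exact h ⟨k, i⟩ ⟨i, rfl⟩


theorem best_arm_max_dominates
    {Ω : Type*} [MeasurableSpace Ω] (P : Measure Ω) [IsProbabilityMeasure P]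
    (K : ℕ) (α β C : Fin K → ℝ) (C' : ℝ)
    (hα : ∀ k, 0 < α k) (hβ : ∀ k, 0 < β k) (hC : ∀ k, 0 < C k) (hC' : 0 < C')
    (kstar : Fin K) (hkstar : ∀ k, k ≠ kstar → α kstar < α k)
    (M N : ℕ) (hM : 0 < M) (hN : 0 < N)
    -- arm `kstar` gets `M` samples, every other arm gets `N` samples
    (n : Fin K → ℕ) (hn : ∀ k, n k = if k = kstar then M else N)
    (X : (k : Fin K) → Fin (n k) → Ω → ℝ)
    (hmeas : ∀ k i, Measurable (X k i))
    -- all samples across all arms are mutually independent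
    (hindep : iIndepFun
      (fun p : Σ k : Fin K, Fin (n k) => X p.1 p.2) P)
    -- within each arm, the samples are identically distributed, second order Pareto
    (hiid : ∀ k, ∃ μ : Measure ℝ,
      IsSecondOrderPareto μ (α k) (β k) (C k) C' ∧ ∀ i, P.map (X k i) = μ)
    (δ : ℝ) (hδ : δ ∈ Set.Ioo (0 : ℝ) 1)
    (ℓ : ℝ) (hℓ : ℓ = ((M : ℝ) * C kstar / (2 * Real.log (1 / δ))) ^ (1 / α kstar))
    (L : Fin K → ℝ)
    (hL : ∀ k, k ≠ kstar →
      L k = (4 * (N : ℝ) * C k / Real.log (1 / (1 - δ))) ^ (1 / α k))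
    (hcondℓ : 2 * C' * ℓ ^ (-(α kstar * (1 + β kstar))) ≤ C kstar * ℓ ^ (-(α kstar)))
    (hcondL₁ : ∀ k, k ≠ kstar → C' * L k ^ (-(α k * (1 + β k))) ≤ C k * L k ^ (-(α k)))
    (hcondL₂ : ∀ k, k ≠ kstar → L k ^ (-(α k)) ≤ 1 / (4 * C k))
    (hcondLℓ : ∀ k, k ≠ kstar → L k ≤ ℓ) :
    1 - (K : ℝ) * δ ≤
      (P {ω | (⨆ k : {k : Fin K // k ≠ kstar}, ⨆ i : Fin (n k.1), X k.1 i ω)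
          ≤ ⨆ i : Fin (n kstar), X kstar i ω}).toReal := by
  obtain ⟨hδ0, hδ1⟩ := hδ
  have hlogδ : 0 < Real.log (1/δ) := Real.log_pos (by rw [lt_div_iff₀ hδ0]; linarith)
  have hlog2 : 0 < Real.log (1/(1-δ)) :=
    Real.log_pos (by rw [lt_div_iff₀ (by linarith)]; linarith)
  have hαs := hα kstar
  -- ℓ facts
  have haℓ : 0 < (M:ℝ) * C kstar / (2 * Real.log (1/δ)) := by
    have := hC kstar
    have hM' : (0:ℝ) < M := by exact_mod_cast hM
    positivity
  have hℓpos : 0 < ℓ := hℓ ▸ Real.rpow_pos_of_pos haℓ _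
  have hℓα : ℓ ^ (-(α kstar)) = 2 * Real.log (1/δ) / ((M:ℝ) * C kstar) := by
    rw [hℓ, ← Real.rpow_mul haℓ.le,
      show (1 / α kstar) * (-(α kstar)) = -1 by field_simp,
      Real.rpow_neg_one, inv_div]
  -- L facts
  have haL : ∀ k, k ≠ kstar → 0 < 4 * (N:ℝ) * C k / Real.log (1/(1-δ)) := by
    intro k hk
    have := hC k
    have hN' : (0:ℝ) < N := by exact_mod_cast hN
    positivity
  have hLpos : ∀ k, k ≠ kstar → 0 < L k := fun k hk =>
    (hL k hk) ▸ Real.rpow_pos_of_pos (haL k hk) _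
  have hLα : ∀ k, k ≠ kstar →
      L k ^ (-(α k)) = Real.log (1/(1-δ)) / (4 * (N:ℝ) * C k) := by
    intro k hk
    rw [hL k hk, ← Real.rpow_mul (haL k hk).le,
      show (1 / α k) * (-(α k)) = -1 by have := (hα k).ne'; field_simp,
      Real.rpow_neg_one, inv_div]
  -- the per-arm distributions
  choose μ hpar hmap using hiid
  have hnpos : ∀ k, 0 < n k := by
    intro k; rw [hn k]; split_ifs <;> assumption
  have hprob : ∀ k, IsProbabilityMeasure (μ k) := by
    intro k
    rw [← hmap k ⟨0, hnpos k⟩]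
    exact Measure.isProbabilityMeasure_map (hmeas k _).aemeasurable
  have hPX : ∀ k i (t : ℝ), P ((X k i)⁻¹' Set.Iic t) = μ k (Set.Iic t) := by
    intro k i t
    rw [← hmap k i, Measure.map_apply (hmeas k i) measurableSet_Iic]
  have hFle1 : ∀ k (t : ℝ), (μ k (Set.Iic t)).toReal ≤ 1 := by
    intro k t
    have := hprob k
    have h1 : μ k (Set.Iic t) ≤ 1 := prob_le_one
    simpa using ENNReal.toReal_mono ENNReal.one_ne_top h1
  have hprodP : ∀ k (t : ℝ),
      P (⋂ i, (X k i)⁻¹' Set.Iic t) = ENNReal.ofReal ((μ k (Set.Iic t)).toReal ^ (n k)) := by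
    intro k t
    rw [meas_iInter_pareto P X hindep k t]
    simp only [hPX]
    rw [Finset.prod_const, Finset.card_univ, Fintype.card_fin,
      ENNReal.ofReal_pow ENNReal.toReal_nonneg, ENNReal.ofReal_toReal (measure_ne_top _ _)]
  -- bound for the best arm
  have hPA : P (⋂ i, (X kstar i)⁻¹' Set.Iic ℓ) ≤ ENNReal.ofReal δ := by
    rw [hprodP kstar ℓ]
    refine ENNReal.ofReal_le_ofReal ?_
    have hnk : n kstar = M := by rw [hn]; simp
    rw [hnk]
    have hpar' := abs_le.mp (hpar kstar ℓ hℓpos)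
    have hFub : (μ kstar (Set.Iic ℓ)).toReal ≤ 1 - C kstar / 2 * ℓ ^ (-(α kstar)) := by
      have h1 := hpar'.1
      nlinarith [hcondℓ]
    have hMc : (M:ℝ) * (C kstar / 2 * ℓ ^ (-(α kstar))) = Real.log (1/δ) := by
      rw [hℓα]
      have hM' : ((M:ℝ)) ≠ 0 := by positivity
      have hC' := (hC kstar).ne'
      field_simp
    calc (μ kstar (Set.Iic ℓ)).toReal ^ M
        ≤ Real.exp (-((M:ℝ) * (C kstar / 2 * ℓ ^ (-(α kstar))))) :=
          pow_le_exp_aux M ENNReal.toReal_nonneg hFub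
      _ = δ := by rw [hMc, Real.exp_neg, Real.exp_log (by positivity), one_div, inv_inv]
  -- bound for the other arms
  have hPB : ∀ k, k ≠ kstar →
      P ((⋂ i, (X k i)⁻¹' Set.Iic (L k))ᶜ) ≤ ENNReal.ofReal δ := by
    intro k hk
    have hmeasB : MeasurableSet (⋂ i, (X k i)⁻¹' Set.Iic (L k)) :=
      MeasurableSet.iInter fun i => (hmeas k i) measurableSet_Iic
    rw [prob_compl_eq_one_sub hmeasB, hprodP k (L k)]
    have hnk : n k = N := by rw [hn, if_neg hk]
    rw [hnk]
    have hge : ENNReal.ofReal (1 - δ) ≤ ENNReal.ofReal ((μ k (Set.Iic (L k))).toReal ^ N) := by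
      refine ENNReal.ofReal_le_ofReal ?_
      set x : ℝ := 2 * C k * L k ^ (-(α k)) with hxdef
      have hx0 : 0 ≤ x := by
        have := (hC k).le
        have := Real.rpow_nonneg (hLpos k hk).le (-(α k))
        positivity
      have hxhalf : x ≤ 1/2 := by
        have h2 := hcondL₂ k hk
        have hCk := hC k
        have h2' := (le_div_iff₀ (by positivity : (0:ℝ) < 4 * C k)).mp h2
        rw [hxdef]; nlinarith
      have hFlb : 1 - x ≤ (μ k (Set.Iic (L k))).toReal := by
        have hpar' := abs_le.mp (hpar k (L k) (hLpos k hk))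
        have h1 := hpar'.2
        have h2 := hcondL₁ k hk
        rw [hxdef]
        nlinarith
      have h2Nx : 2 * (N:ℝ) * x = Real.log (1/(1-δ)) := by
        rw [hxdef, hLα k hk]
        have hN' : ((N:ℝ)) ≠ 0 := by positivity
        have hC'' := (hC k).ne'
        field_simp
        ring
      calc 1 - δ = Real.exp (-(2 * (N:ℝ) * x)) := by
            have h1δ : (0:ℝ) < 1 - δ := by linarith
            rw [h2Nx, Real.exp_neg, Real.exp_log (by positivity), one_div, inv_inv]
        _ ≤ (μ k (Set.Iic (L k))).toReal ^ N := exp_le_pow_aux N hx0 hxhalf hFlb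
    calc 1 - ENNReal.ofReal ((μ k (Set.Iic (L k))).toReal ^ N)
        ≤ 1 - ENNReal.ofReal (1 - δ) := tsub_le_tsub_left hge 1
      _ = ENNReal.ofReal δ := by
          rw [← ENNReal.ofReal_one, ← ENNReal.ofReal_sub _ (by linarith : (0:ℝ) ≤ 1 - δ)]
          norm_num
  -- the bad events
  set Bad : Fin K → Set Ω := fun k =>
    if k = kstar then ⋂ i, (X k i)⁻¹' Set.Iic ℓ
    else (⋂ i, (X k i)⁻¹' Set.Iic (L k))ᶜ with hBadDef
  have hBadLe : ∀ k, P (Bad k) ≤ ENNReal.ofReal δ := by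
    intro k
    by_cases hk : k = kstar
    · subst hk
      have : Bad k = ⋂ i, (X k i)⁻¹' Set.Iic ℓ := by simp only [hBadDef, if_pos]
      rw [this]; exact hPA
    · have : Bad k = (⋂ i, (X k i)⁻¹' Set.Iic (L k))ᶜ := by simp only [hBadDef, if_neg hk]
      rw [this]; exact hPB k hk
  have hBadMeas : ∀ k, MeasurableSet (Bad k) := by
    intro k
    simp only [hBadDef]
    split_ifs
    · exact MeasurableSet.iInter fun i => (hmeas k i) measurableSet_Iic
    · exact (MeasurableSet.iInter fun i => (hmeas k i) measurableSet_Iic).compl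
  have hU : P (⋃ k, Bad k) ≤ ENNReal.ofReal ((K:ℝ) * δ) := by
    calc P (⋃ k, Bad k) ≤ ∑' k, P (Bad k) := measure_iUnion_le _
      _ = ∑ k, P (Bad k) := tsum_fintype _
      _ ≤ ∑ _k : Fin K, ENNReal.ofReal δ := Finset.sum_le_sum fun k _ => hBadLe k
      _ = (K : ℝ≥0∞) * ENNReal.ofReal δ := by
          rw [Finset.sum_const, Finset.card_univ, Fintype.card_fin, nsmul_eq_mul]
      _ = ENNReal.ofReal ((K:ℝ) * δ) := by
          rw [ENNReal.ofReal_mul (by positivity : (0:ℝ) ≤ (K:ℝ)), ENNReal.ofReal_natCast]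
  -- the good event is contained in the target event
  have hsub : (⋃ k, Bad k)ᶜ ⊆
      {ω | (⨆ k : {k : Fin K // k ≠ kstar}, ⨆ i : Fin (n k.1), X k.1 i ω)
          ≤ ⨆ i : Fin (n kstar), X kstar i ω} := by
    intro ω hω
    simp only [Set.mem_compl_iff, Set.mem_iUnion, not_exists] at hω
    have hstar := hω kstar
    have hBs : Bad kstar = ⋂ i, (X kstar i)⁻¹' Set.Iic ℓ := by simp only [hBadDef, if_pos]
    rw [hBs] at hstar
    simp only [Set.mem_iInter, Set.mem_preimage, Set.mem_Iic, not_forall] at hstar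
    obtain ⟨i0, hi0⟩ := hstar
    have hother : ∀ (k : Fin K) (hk : k ≠ kstar) (i : Fin (n k)), X k i ω ≤ L k := by
      intro k hk i
      have hB : Bad k = (⋂ i, (X k i)⁻¹' Set.Iic (L k))ᶜ := by simp only [hBadDef, if_neg hk]
      have := hω k
      rw [hB] at this
      simp only [Set.mem_compl_iff, not_not, Set.mem_iInter, Set.mem_preimage,
        Set.mem_Iic] at this
      exact this i
    have h2 : ℓ ≤ ⨆ i, X kstar i ω :=
      le_trans (le_of_not_ge hi0) (le_ciSup (f := fun i => X kstar i ω) (Set.Finite.bddAbove (Set.finite_range _)) i0)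
    have h1 : (⨆ k : {k : Fin K // k ≠ kstar}, ⨆ i : Fin (n k.1), X k.1 i ω) ≤ ℓ := by
      rcases isEmpty_or_nonempty {k : Fin K // k ≠ kstar} with he | hne
      · rw [Real.iSup_of_isEmpty]; exact hℓpos.le
      · refine ciSup_le fun k => ?_
        have : Nonempty (Fin (n k.1)) := by
          rw [hn, if_neg k.2]; exact Fin.pos_iff_nonempty.mp hN
        exact ciSup_le fun i => le_trans (hother k.1 k.2 i) (hcondLℓ k.1 k.2)
    exact le_trans h1 h2
  -- conclude
  have hUc : P ((⋃ k, Bad k)ᶜ) = 1 - P (⋃ k, Bad k) :=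
    prob_compl_eq_one_sub (MeasurableSet.iUnion hBadMeas)
  have hPU1 : P (⋃ k, Bad k) ≤ 1 := prob_le_one
  have hmain : 1 - (K:ℝ) * δ ≤ (P ((⋃ k, Bad k)ᶜ)).toReal := by
    rw [hUc, ENNReal.toReal_sub_of_le hPU1 ENNReal.one_ne_top, ENNReal.toReal_one]
    have hUr : (P (⋃ k, Bad k)).toReal ≤ (K:ℝ) * δ := by
      have := ENNReal.toReal_mono ENNReal.ofReal_ne_top hU
      rwa [ENNReal.toReal_ofReal (by positivity : (0:ℝ) ≤ (K:ℝ) * δ)] at this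
    linarith
  refine le_trans hmain (ENNReal.toReal_mono (measure_ne_top _ _) (measure_mono hsub))
end

section
/- Let α > 1, let A > 0, let δ ∈ (0, 1/4], and set x_− = ( A / log(1/(1−2δ)) )^(1/α). Then ∫_{x_−}^∞ ( 1 − exp(−A x^(−α)) ) dx ≤ (8/(α−1)) A^(1/α) δ^(1 − 1/α). -/
open MeasureTheory Real

theorem frechet_tail_integral_bound
    (α A δ : ℝ) (hα : 1 < α) (hA : 0 < A) (hδ : δ ∈ Set.Ioc (0 : ℝ) (1 / 4)) :
    ∫ x in Set.Ioi ((A / Real.log (1 / (1 - 2 * δ))) ^ (1 / α)),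
        (1 - Real.exp (-(A * x ^ (-α)))) ≤
      8 / (α - 1) * A ^ (1 / α) * δ ^ (1 - 1 / α) := by
  obtain ⟨hδ0, hδ4⟩ := hδ
  set L := Real.log (1 / (1 - 2 * δ)) with hLdef
  have hL0 : 0 < L := by
    apply Real.log_pos
    rw [lt_div_iff₀ (by linarith)]
    linarith
  have hL4 : L ≤ 4 * δ := by
    have h1 := Real.log_le_sub_one_of_pos (one_div_pos.mpr (by linarith : (0:ℝ) < 1 - 2 * δ))
    have h2 : 1 / (1 - 2 * δ) - 1 ≤ 4 * δ := by
      rw [div_sub' (by linarith : (1 : ℝ) - 2 * δ ≠ 0), div_le_iff₀ (by linarith)]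
      nlinarith
    linarith
  set c := (A / L) ^ (1 / α) with hcdef
  have hc0 : 0 < c := Real.rpow_pos_of_pos (by positivity) _
  -- integrability of the dominating function
  have hint : IntegrableOn (fun x : ℝ => A * x ^ (-α)) (Set.Ioi c) :=
    (integrableOn_Ioi_rpow_of_lt (by linarith) hc0).const_mul A
  -- pointwise bounds
  have hpt : ∀ x ∈ Set.Ioi c, 1 - Real.exp (-(A * x ^ (-α))) ≤ A * x ^ (-α) := by
    intro x _
    have := Real.add_one_le_exp (-(A * x ^ (-α)))
    linarith
  have hpt0 : ∀ x ∈ Set.Ioi c, 0 ≤ 1 - Real.exp (-(A * x ^ (-α))) := by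
    intro x hx
    have hx0 : 0 < x := hc0.trans hx
    have h1 : Real.exp (-(A * x ^ (-α))) ≤ 1 := by
      rw [Real.exp_le_one_iff]
      have : 0 ≤ A * x ^ (-α) := by positivity
      linarith
    linarith
  -- integrability of the integrand
  have hint1 : IntegrableOn (fun x : ℝ => 1 - Real.exp (-(A * x ^ (-α)))) (Set.Ioi c) := by
    apply MeasureTheory.Integrable.mono hint
    · apply Measurable.aestronglyMeasurable
      fun_prop
    · filter_upwards [ae_restrict_mem measurableSet_Ioi] with x hx
      have hx0 : 0 < x := hc0.trans hx
      rw [Real.norm_eq_abs, Real.norm_eq_abs, abs_of_nonneg (hpt0 x hx),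
        abs_of_nonneg (by positivity)]
      exact hpt x hx
  refine (setIntegral_mono_on hint1 hint measurableSet_Ioi hpt).trans ?_
  -- compute the integral of the dominating function
  rw [MeasureTheory.integral_const_mul, integral_Ioi_rpow_of_lt (by linarith) hc0]
  have hα0 : (0 : ℝ) < α := by linarith
  have hne : (-α + 1 : ℝ) ≠ 0 := by intro h; linarith
  have hval : A * (-c ^ (-α + 1) / (-α + 1)) = A / (α - 1) * c ^ (1 - α) := by
    have h1 : (1 : ℝ) - α = -α + 1 := by ring
    have hne2 : α - 1 ≠ 0 := sub_ne_zero.mpr hα.ne'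
    rw [h1]
    field_simp [hne, hne2]
    ring
  rw [hval]
  have hp0 : 0 < 1 - 1 / α := by
    have : 1 / α < 1 := by rw [div_lt_one hα0]; exact hα
    linarith
  have hp1 : 1 - 1 / α ≤ 1 := by
    have : 0 < 1 / α := by positivity
    linarith
  -- c ^ (1 - α) = (L / A) ^ (1 - 1/α)
  have hc1 : c ^ (1 - α) = (L / A) ^ (1 - 1 / α) := by
    rw [hcdef, ← Real.rpow_mul (by positivity : (0:ℝ) ≤ A / L)]
    have he : 1 / α * (1 - α) = -(1 - 1 / α) := by
      field_simp
      ring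
    rw [he, Real.rpow_neg (by positivity), ← Real.inv_rpow (by positivity), inv_div]
  rw [hc1]
  -- key algebraic identity
  have hkey : A / (α - 1) * (L / A) ^ (1 - 1 / α)
      = A ^ (1 / α) / (α - 1) * L ^ (1 - 1 / α) := by
    rw [Real.div_rpow hL0.le hA.le]
    have hAp : A ^ (1 / α) = A / A ^ (1 - 1 / α) := by
      have h1 : 1 / α = 1 - (1 - 1 / α) := by ring
      conv_lhs => rw [h1]
      rw [Real.rpow_sub hA, Real.rpow_one]
    rw [hAp]
    have hApos : (0:ℝ) < A ^ (1 - 1 / α) := Real.rpow_pos_of_pos hA _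
    field_simp
  rw [hkey]
  -- bound L^p by 8 δ^p
  have hLp : L ^ (1 - 1 / α) ≤ 8 * δ ^ (1 - 1 / α) := by
    calc L ^ (1 - 1 / α) ≤ (4 * δ) ^ (1 - 1 / α) :=
          Real.rpow_le_rpow hL0.le hL4 hp0.le
    _ = 4 ^ (1 - 1 / α) * δ ^ (1 - 1 / α) := Real.mul_rpow (by norm_num) hδ0.le
    _ ≤ 8 * δ ^ (1 - 1 / α) := by
        have h4 : (4:ℝ) ^ (1 - 1 / α) ≤ 4 ^ (1:ℝ) :=
          Real.rpow_le_rpow_of_exponent_le (by norm_num) hp1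
        rw [Real.rpow_one] at h4
        nlinarith [Real.rpow_nonneg hδ0.le (1 - 1 / α)]
  have hα1 : (0:ℝ) < α - 1 := by linarith
  have hApos2 : (0:ℝ) < A ^ (1/α) := Real.rpow_pos_of_pos hA _
  calc A ^ (1/α) / (α - 1) * L ^ (1 - 1 / α)
      ≤ A ^ (1/α) / (α - 1) * (8 * δ ^ (1 - 1 / α)) :=
        mul_le_mul_of_nonneg_left hLp (by positivity)
  _ = 8 / (α - 1) * A ^ (1/α) * δ ^ (1 - 1 / α) := by ring
end
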